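/- arXiv:2205.08951 — 4 statements merged into one kernel-verified Lean document; each statement's English description precedes it below -/
import Mathlib

section
/- Assume K_M is positive semidefinite and F₀ ∈ ℝ^{n×n} is symmetric positive semidefinite. Then the unique solution F : [0,T] → ℝ^{n×n} of F'(t) = L[F(t)], F(0) = F₀, is symmetric positive semidefinite for every t ∈ [0,T]. -/
open Matrix MeasureTheory Filter
open scoped Kronecker Topology

/-- Column-stacking vectorization of a matrix: `vecM X (j, i) = X i j`. -/
def vecM {a b : Type*} (X : Matrix a b ℝ) : b × a → ℝ := fun p => X p.2 p.1

/-- Inverse of column-stacking vectorization. -/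
def unvecM {a b : Type*} (v : b × a → ℝ) : Matrix a b ℝ := Matrix.of fun i j => v (j, i)

/-- (Mixed) Lyapunov-type operator `X ↦ A₁ X + X A₂ᵀ + ∑ᵢⱼ kᵢⱼ • N₁ᵢ X N₂ⱼᵀ`. -/
def lyapM {a b : Type*} [Fintype a] [Fintype b] {q : ℕ}
    (A₁ : Matrix a a ℝ) (A₂ : Matrix b b ℝ)
    (N₁ : Fin q → Matrix a a ℝ) (N₂ : Fin q → Matrix b b ℝ)
    (K : Matrix (Fin q) (Fin q) ℝ) (X : Matrix a b ℝ) : Matrix a b ℝ :=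
  A₁ * X + X * A₂ᵀ + ∑ i, ∑ j, K i j • (N₁ i * X * (N₂ j)ᵀ)

/-- Frobenius adjoint of `lyapM`: `X ↦ A₁ᵀ X + X A₂ + ∑ᵢⱼ kᵢⱼ • N₁ᵢᵀ X N₂ⱼ`. -/
def lyapAdjM {a b : Type*} [Fintype a] [Fintype b] {q : ℕ}
    (A₁ : Matrix a a ℝ) (A₂ : Matrix b b ℝ)
    (N₁ : Fin q → Matrix a a ℝ) (N₂ : Fin q → Matrix b b ℝ)
    (K : Matrix (Fin q) (Fin q) ℝ) (X : Matrix a b ℝ) : Matrix a b ℝ :=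
  A₁ᵀ * X + X * A₂ + ∑ i, ∑ j, K i j • ((N₁ i)ᵀ * X * N₂ j)

/-- Kronecker matrix `𝒦 = I ⊗ A₁ + A₂ ⊗ I + ∑ᵢⱼ kᵢⱼ • (N₂ᵢ ⊗ N₁ⱼ)` associated to `lyapM`. -/
noncomputable def kronM {a b : Type*} [Fintype a] [Fintype b] [DecidableEq a] [DecidableEq b] {q : ℕ}
    (A₁ : Matrix a a ℝ) (A₂ : Matrix b b ℝ)
    (N₁ : Fin q → Matrix a a ℝ) (N₂ : Fin q → Matrix b b ℝ)
    (K : Matrix (Fin q) (Fin q) ℝ) : Matrix (b × a) (b × a) ℝ :=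
  (1 : Matrix b b ℝ) ⊗ₖ A₁ + A₂ ⊗ₖ (1 : Matrix a a ℝ) + ∑ i, ∑ j, K i j • (N₂ i ⊗ₖ N₁ j)

/-- `F` solves the matrix ODE `F' = L (F t)` at every `t ∈ [0,T]` (entrywise). -/
def solvesODE {a b : Type*} (L : Matrix a b ℝ → Matrix a b ℝ)
    (F : ℝ → Matrix a b ℝ) (T : ℝ) : Prop :=
  ∀ t ∈ Set.Icc (0:ℝ) T, ∀ i j, HasDerivAt (fun s => F s i j) (L (F t) i j) t

/-- Entrywise integral `∫₀ᵀ F(t) dt`. -/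
noncomputable def intM {a b : Type*} (F : ℝ → Matrix a b ℝ) (T : ℝ) : Matrix a b ℝ :=
  Matrix.of fun i j => ∫ t in (0:ℝ)..T, F t i j

/-- Explicit solution of a vectorized linear matrix ODE via the matrix exponential. -/
noncomputable def expSolM {a b : Type*} [Fintype a] [Fintype b] [DecidableEq a] [DecidableEq b]
    (Kmat : Matrix (b × a) (b × a) ℝ) (F₀ : Matrix a b ℝ) (t : ℝ) : Matrix a b ℝ :=
  unvecM (NormedSpace.exp (t • Kmat) *ᵥ vecM F₀)


section AuxLemmas
open scoped Topology


lemma mixedPos {n q : ℕ} {K : Matrix (Fin q) (Fin q) ℝ} (hK : K.PosSemidef)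
    {M : Matrix (Fin n) (Fin n) ℝ} (hM : M.PosSemidef) (y : Fin q → Fin n → ℝ) :
    0 ≤ ∑ i, ∑ j, K i j * (y i ⬝ᵥ (M *ᵥ y j)) := by
  obtain ⟨B, rfl⟩ : ∃ B : Matrix (Fin n) (Fin n) ℝ, M = Bᴴ * B := by
    open scoped MatrixOrder in
    obtain ⟨X, hX, -, hXe⟩ := CFC.exists_sqrt_of_isSelfAdjoint_of_quasispectrumRestricts
      hM.isHermitian (QuasispectrumRestricts.nnreal_of_nonneg hM.nonneg)
    refine ⟨X, ?_⟩
    rw [← hXe]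
    congr 1
    exact hX.star_eq.symm
  set u : Fin q → Fin n → ℝ := fun i => B *ᵥ y i with hu
  have key : ∀ i j, (y i) ⬝ᵥ ((Bᴴ * B) *ᵥ y j) = ∑ c, u i c * u j c := by
    intro i j
    rw [← mulVec_mulVec, dotProduct_mulVec, vecMul_conjTranspose]
    simp [u, dotProduct, star_trivial, mul_comm]
  have h2 : ∀ c, (fun i => u i c) ⬝ᵥ (K *ᵥ fun i => u i c) = ∑ i, ∑ j, K i j * (u i c * u j c) := by
    intro c
    simp only [dotProduct, mulVec, Finset.mul_sum]
    exact Finset.sum_congr rfl fun i _ => Finset.sum_congr rfl fun j _ => by ring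
  calc (0:ℝ) ≤ ∑ c, (fun i => u i c) ⬝ᵥ (K *ᵥ fun i => u i c) :=
        Finset.sum_nonneg fun c _ => by simpa [star_trivial] using hK.dotProduct_mulVec_nonneg (fun i => u i c)
    _ = ∑ c, ∑ i, ∑ j, K i j * (u i c * u j c) := Finset.sum_congr rfl fun c _ => h2 c
    _ = ∑ i, ∑ c, ∑ j, K i j * (u i c * u j c) := Finset.sum_comm
    _ = ∑ i, ∑ j, ∑ c, K i j * (u i c * u j c) :=
        Finset.sum_congr rfl fun i _ => Finset.sum_comm
    _ = ∑ i, ∑ j, K i j * (y i ⬝ᵥ ((Bᴴ * B) *ᵥ y j)) := by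
        refine Finset.sum_congr rfl fun i _ => Finset.sum_congr rfl fun j _ => ?_
        rw [key, Finset.mul_sum]


lemma quad_eq {n : ℕ} (M : Matrix (Fin n) (Fin n) ℝ) (x : Fin n → ℝ) :
    x ⬝ᵥ (M *ᵥ x) = ∑ i, ∑ j, M i j * (x i * x j) := by
  simp only [dotProduct, mulVec, Finset.mul_sum]
  exact Finset.sum_congr rfl fun i _ => Finset.sum_congr rfl fun j _ => by ring

lemma dot_self_ge_one {n : ℕ} {x : Fin n → ℝ} (hx : ‖x‖ = 1) : 1 ≤ x ⬝ᵥ x := by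
  have hne : Nonempty (Fin n) := by
    by_contra h
    have : x = 0 := funext fun i => absurd ⟨i⟩ h
    rw [this] at hx; simp at hx
  obtain ⟨i, -, hi⟩ := Finset.exists_mem_eq_sup (Finset.univ : Finset (Fin n))
    Finset.univ_nonempty (fun i => ‖x i‖₊)
  have hxi : |x i| = 1 := by
    have : ‖x‖₊ = ‖x i‖₊ := by rw [Pi.nnnorm_def, hi]
    have h2 : ‖x‖ = ‖x i‖ := by rw [← coe_nnnorm, ← coe_nnnorm, this]
    rw [← Real.norm_eq_abs, ← h2, hx]
  calc (1:ℝ) = x i * x i := by nlinarith [abs_mul_abs_self (x i)]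
    _ ≤ ∑ j, x j * x j := Finset.single_le_sum (f := fun j => x j * x j)
        (fun j _ => mul_self_nonneg (x j)) (Finset.mem_univ i)
    _ = x ⬝ᵥ x := by simp [dotProduct]

lemma quad_le_of_norm_le_one {n : ℕ} (M : Matrix (Fin n) (Fin n) ℝ) {x : Fin n → ℝ}
    (hx : ‖x‖ = 1) : x ⬝ᵥ (M *ᵥ x) ≤ ∑ i, ∑ j, |M i j| := by
  rw [quad_eq]
  refine Finset.sum_le_sum fun i _ => Finset.sum_le_sum fun j _ => ?_
  have hxi : |x i| ≤ 1 := by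
    simpa [Real.norm_eq_abs, hx] using norm_le_pi_norm x i
  have hxj : |x j| ≤ 1 := by
    simpa [Real.norm_eq_abs, hx] using norm_le_pi_norm x j
  calc M i j * (x i * x j) ≤ |M i j * (x i * x j)| := le_abs_self _
    _ = |M i j| * (|x i| * |x j|) := by rw [abs_mul, abs_mul]
    _ ≤ |M i j| * 1 := by
        apply mul_le_mul_of_nonneg_left _ (abs_nonneg _)
        nlinarith [abs_nonneg (x i), abs_nonneg (x j)]
    _ = |M i j| := mul_one _

lemma continuous_quad {n : ℕ} (M : Matrix (Fin n) (Fin n) ℝ) :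
    Continuous fun x : Fin n → ℝ => x ⬝ᵥ (M *ᵥ x) := by
  simp only [dotProduct, mulVec]
  exact continuous_finset_sum _ fun i _ => (continuous_apply i).mul
    (continuous_finset_sum _ fun j _ => continuous_const.mul (continuous_apply j))

lemma isOpen_posQuad {n : ℕ} :
    IsOpen {M : Matrix (Fin n) (Fin n) ℝ | ∀ x : Fin n → ℝ, ‖x‖ = 1 → 0 < x ⬝ᵥ (M *ᵥ x)} := by
  rcases Nat.eq_zero_or_pos n with hn | hn
  · subst hn
    convert isOpen_univ
    ext M
    simp only [Set.mem_setOf_eq, Set.mem_univ, iff_true]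
    intro x hx
    exfalso
    have h0 : x = 0 := Subsingleton.elim _ _
    rw [h0, norm_zero] at hx
    exact one_ne_zero hx.symm
  · rw [isOpen_iff_mem_nhds]
    intro M hM
    haveI : Nonempty (Fin n) := ⟨⟨0, hn⟩⟩
    -- minimum over the sphere
    have hcs : IsCompact (Metric.sphere (0 : Fin n → ℝ) 1) := isCompact_sphere 0 1
    have hsne : (Metric.sphere (0 : Fin n → ℝ) 1).Nonempty := by
      rw [NormedSpace.sphere_nonempty]; norm_num
    obtain ⟨x₀, hx₀s, hx₀min⟩ := hcs.exists_isMinOn hsne ((continuous_quad M).continuousOn)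
    have hx₀norm : ‖x₀‖ = 1 := by simpa using hx₀s
    set m := x₀ ⬝ᵥ (M *ᵥ x₀) with hm
    have hmpos : 0 < m := hM x₀ hx₀norm
    -- neighborhood
    have hU : {M' : Matrix (Fin n) (Fin n) ℝ | ∀ i j, |M' i j - M i j| < m / (n^2 + 1)} ∈ 𝓝 M := by
      have : ∀ i j : Fin n, {M' : Matrix (Fin n) (Fin n) ℝ | |M' i j - M i j| < m / (n^2 + 1)} ∈ 𝓝 M := by
        intro i j
        have hc : Continuous fun M' : Matrix (Fin n) (Fin n) ℝ => |M' i j - M i j| :=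
          ((continuous_id.matrix_elem i j).sub continuous_const).abs
        have : IsOpen {M' : Matrix (Fin n) (Fin n) ℝ | |M' i j - M i j| < m / (n^2 + 1)} :=
          isOpen_lt hc continuous_const
        exact this.mem_nhds (by simp; positivity)
      have := Filter.iInter_mem.2 (fun i => Filter.iInter_mem.2 (this i))
      simpa [Set.setOf_forall] using this
    filter_upwards [hU] with M' hM' x hx
    have hdiff : x ⬝ᵥ ((M' - M) *ᵥ x) ≤ ∑ i, ∑ j, |(M' - M) i j| :=
      quad_le_of_norm_le_one _ hx
    have hsum : ∑ i, ∑ j, |(M' - M) i j| < m := by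
      have hcard : ((Finset.univ : Finset (Fin n)).card : ℝ) = n := by simp
      calc ∑ i, ∑ j, |(M' - M) i j| ≤ ∑ _i : Fin n, ∑ _j : Fin n, m / (n^2 + 1) := by
            refine Finset.sum_le_sum fun i _ => Finset.sum_le_sum fun j _ => ?_
            exact le_of_lt (by simpa [Matrix.sub_apply] using hM' i j)
        _ = (n:ℝ)^2 * (m / (n^2+1)) := by
            simp [Finset.sum_const, hcard]; ring
        _ < m := by
            rw [div_eq_inv_mul]
            have h1 : (0:ℝ) < (n:ℝ)^2 + 1 := by positivity
            rw [mul_comm ((n:ℝ)^2)]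
            calc ((n:ℝ)^2 + 1)⁻¹ * m * (n:ℝ)^2 < ((n:ℝ)^2+1)⁻¹ * m * ((n:ℝ)^2 + 1) := by
                  have : (0:ℝ) < ((n:ℝ)^2+1)⁻¹ * m := by positivity
                  nlinarith
              _ = m := by field_simp
    have hlow : -(∑ i, ∑ j, |(M' - M) i j|) ≤ x ⬝ᵥ ((M' - M) *ᵥ x) := by
      have h2 : x ⬝ᵥ ((M - M') *ᵥ x) ≤ ∑ i, ∑ j, |(M - M') i j| := quad_le_of_norm_le_one _ hx
      have h3 : ∀ i j : Fin n, |(M - M') i j| = |(M' - M) i j| := fun i j => by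
        simp [Matrix.sub_apply, abs_sub_comm]
      have h4 : x ⬝ᵥ ((M - M') *ᵥ x) = -(x ⬝ᵥ ((M' - M) *ᵥ x)) := by
        have : (M - M') = -(M' - M) := by abel
        rw [this, Matrix.neg_mulVec, dotProduct_neg]
      rw [h4] at h2
      simp only [h3] at h2
      linarith
    have hMxm : m ≤ x ⬝ᵥ (M *ᵥ x) := hx₀min (by simpa [Metric.mem_sphere] using hx)
    have hdec : x ⬝ᵥ (M' *ᵥ x) = x ⬝ᵥ (M *ᵥ x) + x ⬝ᵥ ((M' - M) *ᵥ x) := by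
      rw [Matrix.sub_mulVec, dotProduct_sub]
      ring
    rw [hdec]
    linarith


section helpers
variable {n : ℕ}

lemma sum_mulVec' {ι : Type*} (s : Finset ι) (M : ι → Matrix (Fin n) (Fin n) ℝ) (x : Fin n → ℝ) :
    (∑ i ∈ s, M i) *ᵥ x = ∑ i ∈ s, M i *ᵥ x := by
  ext k
  simp only [mulVec, dotProduct, Finset.sum_apply, Matrix.sum_apply, Finset.sum_mul]
  rw [Finset.sum_comm]

lemma dot_sum_mulVec {ι : Type*} (s : Finset ι) (M : ι → Matrix (Fin n) (Fin n) ℝ) (x : Fin n → ℝ) :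
    x ⬝ᵥ ((∑ i ∈ s, M i) *ᵥ x) = ∑ i ∈ s, x ⬝ᵥ (M i *ᵥ x) := by
  rw [sum_mulVec']
  simp [dotProduct, Finset.mul_sum]
  rw [Finset.sum_comm]

end helpers

end AuxLemmas

section AuxODE
open scoped Topology
variable {n q : ℕ} (A : Matrix (Fin n) (Fin n) ℝ) (N : Fin q → Matrix (Fin n) (Fin n) ℝ)
    (K : Matrix (Fin q) (Fin q) ℝ)

lemma lyapM_add (X Y : Matrix (Fin n) (Fin n) ℝ) :
    lyapM A A N N K (X + Y) = lyapM A A N N K X + lyapM A A N N K Y := by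
  simp [lyapM, Matrix.mul_add, Matrix.add_mul, smul_add, Finset.sum_add_distrib]
  abel

lemma lyapM_smul (c : ℝ) (X : Matrix (Fin n) (Fin n) ℝ) :
    lyapM A A N N K (c • X) = c • lyapM A A N N K X := by
  simp [lyapM, Matrix.mul_smul, Matrix.smul_mul, smul_add, Finset.smul_sum, smul_comm c]

lemma lyapM_sub (X Y : Matrix (Fin n) (Fin n) ℝ) :
    lyapM A A N N K (X - Y) = lyapM A A N N K X - lyapM A A N N K Y := by
  have := lyapM_add A N K (X - Y) Y
  simp at this
  rw [this]; abel

lemma lyapM_transpose (hKsym : Kᵀ = K) (X : Matrix (Fin n) (Fin n) ℝ) :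
    (lyapM A A N N K X)ᵀ = lyapM A A N N K Xᵀ := by
  have hk : ∀ i j, K j i = K i j := fun i j => by
    conv_rhs => rw [← hKsym, transpose_apply]
  simp only [lyapM, transpose_add, transpose_mul, transpose_transpose, transpose_sum,
    transpose_smul]
  rw [Finset.sum_comm]
  congr 1
  · abel
  · refine Finset.sum_congr rfl fun i _ => Finset.sum_congr rfl fun j _ => ?_
    rw [hk j i, Matrix.mul_assoc]


lemma symm_of_solvesODE {T : ℝ} (hKsym : Kᵀ = K)
    (F : ℝ → Matrix (Fin n) (Fin n) ℝ)
    (hF : solvesODE (lyapM A A N N K) F T) (hF0 : (F 0)ᵀ = F 0) :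
    ∀ t ∈ Set.Icc (0:ℝ) T, (F t)ᵀ = F t := by
  classical
  let ℓ : ((Fin n × Fin n) → ℝ) →ₗ[ℝ] ((Fin n × Fin n) → ℝ) :=
    { toFun := fun y => fun p => lyapM A A N N K (Matrix.of fun i j => y (i, j)) p.1 p.2
      map_add' := by
        intro y z
        funext p
        show lyapM A A N N K (Matrix.of fun i j => (y + z) (i, j)) p.1 p.2
          = lyapM A A N N K (Matrix.of fun i j => y (i, j)) p.1 p.2
            + lyapM A A N N K (Matrix.of fun i j => z (i, j)) p.1 p.2
        have h : (Matrix.of fun i j => (y + z) (i, j))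
            = (Matrix.of fun i j => y (i, j)) + (Matrix.of fun i j => z (i, j)) := rfl
        rw [h, lyapM_add]; rfl
      map_smul' := by
        intro c y
        funext p
        show lyapM A A N N K (Matrix.of fun i j => (c • y) (i, j)) p.1 p.2
          = c • lyapM A A N N K (Matrix.of fun i j => y (i, j)) p.1 p.2
        have h : (Matrix.of fun i j => (c • y) (i, j))
            = c • (Matrix.of fun i j => y (i, j)) := rfl
        rw [h, lyapM_smul]; rfl }
  let Lc := LinearMap.toContinuousLinearMap ℓ
  have hv : ∀ t : ℝ, LipschitzWith ‖Lc‖₊ (fun y : (Fin n × Fin n) → ℝ => Lc y) :=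
    fun _ => Lc.lipschitz
  set f : ℝ → ((Fin n × Fin n) → ℝ) := fun t => fun p => F t p.1 p.2 - F t p.2 p.1 with hf_def
  have hder : ∀ t ∈ Set.Icc (0:ℝ) T, HasDerivAt f (Lc (f t)) t := by
    intro t ht
    rw [hasDerivAt_pi]
    intro p
    have h1 := (hF t ht p.1 p.2).sub (hF t ht p.2 p.1)
    convert h1 using 1
    show lyapM A A N N K (Matrix.of fun i j => f t (i, j)) p.1 p.2 = _
    have hm : (Matrix.of fun i j => f t (i, j)) = F t - (F t)ᵀ := by
      ext i j; rfl
    rw [hm, lyapM_sub, ← lyapM_transpose A N K hKsym]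
    rfl
    rfl
  have hinit : f 0 = (fun _ => (0 : (Fin n × Fin n) → ℝ)) 0 := by
    funext p
    have h3 : F 0 p.1 p.2 = F 0 p.2 p.1 := by
      have := congrFun (congrFun hF0 p.2) p.1
      simpa using this
    simp [f, h3]
  have key := ODE_solution_unique (v := fun _ y => Lc y) hv
    (f := f) (g := fun _ => 0) (a := (0:ℝ)) (b := T)
    (fun t ht => (hder t ht).continuousAt.continuousWithinAt)
    (fun t ht => (hder t (Set.mem_Icc_of_Ico ht)).hasDerivWithinAt)
    continuousOn_const
    (fun t ht => by
      simpa using (hasDerivAt_const t (0 : (Fin n × Fin n) → ℝ)).hasDerivWithinAt)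
    hinit
  intro t ht
  have := key ht
  ext i j
  have h2 := congrFun this (i, j)
  simp [f] at h2
  simp only [Matrix.transpose_apply]
  linarith

end AuxODE

/-- if `K_M` is positive semidefinite and `F₀` is symmetric positive
semidefinite, then the solution of `F' = 𝓛[F]`, `F 0 = F₀` is positive semidefinite
(in particular symmetric) on `[0,T]`. -/
theorem stmt_3 {n q : ℕ} (T : ℝ) (hT : 0 < T)
    (A : Matrix (Fin n) (Fin n) ℝ) (N : Fin q → Matrix (Fin n) (Fin n) ℝ)
    (K : Matrix (Fin q) (Fin q) ℝ) (hK : K.PosSemidef)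
    (F₀ : Matrix (Fin n) (Fin n) ℝ) (hF₀ : F₀.PosSemidef)
    (F : ℝ → Matrix (Fin n) (Fin n) ℝ)
    (hF : solvesODE (lyapM A A N N K) F T) (hF0 : F 0 = F₀) :
    ∀ t ∈ Set.Icc (0:ℝ) T, (F t).PosSemidef := by
  classical
  have hKsym : Kᵀ = K := by
    have h := hK.1
    rwa [Matrix.IsHermitian, conjTranspose_eq_transpose_of_trivial] at h
  have hsymm : ∀ t ∈ Set.Icc (0:ℝ) T, (F t)ᵀ = F t := by
    apply symm_of_solvesODE A N K hKsym F hF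
    rw [hF0]
    have h := hF₀.1
    rwa [Matrix.IsHermitian, conjTranspose_eq_transpose_of_trivial] at h
  set M₀ : Matrix (Fin n) (Fin n) ℝ := A + Aᵀ + ∑ i, ∑ j, K i j • (N i * (N j)ᵀ) with hM₀def
  set c : ℝ := 1 + ∑ i, ∑ j, |M₀ i j| with hcdef
  have habs : (0:ℝ) ≤ ∑ i, ∑ j, |M₀ i j| :=
    Finset.sum_nonneg fun i _ => Finset.sum_nonneg fun j _ => abs_nonneg _
  have hcpos : 0 < c := by rw [hcdef]; linarith
  have hM₀bound : ∀ x : Fin n → ℝ, ‖x‖ = 1 → x ⬝ᵥ (M₀ *ᵥ x) ≤ c - 1 := by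
    intro x hx
    have := quad_le_of_norm_le_one M₀ hx
    rw [hcdef]; linarith
  have main : ∀ ε : ℝ, 0 < ε → ∀ t ∈ Set.Icc (0:ℝ) T, ∀ x : Fin n → ℝ, ‖x‖ = 1 →
      0 < x ⬝ᵥ ((F t + (ε * Real.exp (c * t)) • (1:Matrix (Fin n) (Fin n) ℝ)) *ᵥ x) := by
    intro ε hε
    by_contra hcon
    push_neg at hcon
    obtain ⟨t₁, ht₁, x₁, hx₁n, hq₁⟩ := hcon
    set π : ℝ → ℝ := fun s => max 0 (min s T) with hπdef
    have hπcont : Continuous π := continuous_const.max (continuous_id.min continuous_const)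
    have hπmem : ∀ s, π s ∈ Set.Icc (0:ℝ) T := fun s =>
      ⟨le_max_left _ _, max_le hT.le (min_le_right _ _)⟩
    have hπid : ∀ s ∈ Set.Icc (0:ℝ) T, π s = s := fun s hs => by
      rw [hπdef]
      simp only
      rw [min_eq_left hs.2, max_eq_right hs.1]
    set g : ℝ → Matrix (Fin n) (Fin n) ℝ :=
      fun s => F (π s) + (ε * Real.exp (c * π s)) • 1 with hgdef
    have hgcont : Continuous g := by
      apply Continuous.add
      · refine continuous_matrix fun i j => ?_
        rw [continuous_iff_continuousAt]
        intro s
        exact ((hF (π s) (hπmem s) i j).continuousAt).comp hπcont.continuousAt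
      · exact (continuous_const.mul ((continuous_const.mul hπcont).rexp)).smul continuous_const
    have hgt : ∀ s ∈ Set.Icc (0:ℝ) T, g s = F s + (ε * Real.exp (c * s)) • 1 := fun s hs => by
      rw [hgdef]; simp only; rw [hπid s hs]
    have hgq : ∀ s ∈ Set.Icc (0:ℝ) T, ∀ z : Fin n → ℝ,
        z ⬝ᵥ (g s *ᵥ z) = z ⬝ᵥ (F s *ᵥ z) + ε * Real.exp (c * s) * (z ⬝ᵥ z) := by
      intro s hs z
      rw [hgt s hs, Matrix.add_mulVec, dotProduct_add, Matrix.smul_mulVec,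
        Matrix.one_mulVec, dotProduct_smul, smul_eq_mul]
    set P : Set (Matrix (Fin n) (Fin n) ℝ) :=
      {M | ∀ x : Fin n → ℝ, ‖x‖ = 1 → 0 < x ⬝ᵥ (M *ᵥ x)} with hPdef
    set S : Set ℝ := Set.Icc 0 T ∩ g ⁻¹' Pᶜ with hSdef
    have hSclosed : IsClosed S :=
      isClosed_Icc.inter (isOpen_posQuad.isClosed_compl.preimage hgcont)
    have hSne : S.Nonempty := by
      refine ⟨t₁, ht₁, ?_⟩
      simp only [Set.mem_preimage, Set.mem_compl_iff, hPdef, Set.mem_setOf_eq]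
      push_neg
      exact ⟨x₁, hx₁n, by rw [hgt t₁ ht₁]; exact hq₁⟩
    have hSbdd : BddBelow S := ⟨0, fun s hs => hs.1.1⟩
    set t₀ := sInf S with ht₀def
    have ht₀S : t₀ ∈ S := hSclosed.csInf_mem hSne hSbdd
    have ht₀Icc : t₀ ∈ Set.Icc (0:ℝ) T := ht₀S.1
    have h0notS : (0:ℝ) ∉ S := by
      intro h
      have h2 := h.2
      simp only [Set.mem_preimage, Set.mem_compl_iff, hPdef, Set.mem_setOf_eq] at h2
      push_neg at h2
      obtain ⟨z, hzn, hzle⟩ := h2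
      rw [hgq 0 (Set.left_mem_Icc.2 hT.le) z, hF0] at hzle
      have h3 : 0 ≤ z ⬝ᵥ (F₀ *ᵥ z) := by simpa using hF₀.dotProduct_mulVec_nonneg z
      have h4 := dot_self_ge_one hzn
      have h5 : (0:ℝ) < Real.exp (c * 0) := Real.exp_pos _
      have h6 : ε * Real.exp (c * 0) * 1 ≤ ε * Real.exp (c * 0) * (z ⬝ᵥ z) :=
        mul_le_mul_of_nonneg_left h4 (mul_pos hε h5).le
      nlinarith [mul_pos hε h5]
    have ht₀pos : 0 < t₀ := ht₀Icc.1.lt_of_ne fun h => h0notS (h ▸ ht₀S)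
    have hbefore : ∀ s, 0 ≤ s → s < t₀ → ∀ z : Fin n → ℝ, 0 ≤ z ⬝ᵥ (g s *ᵥ z) := by
      intro s hs0 hst z
      have hsIcc : s ∈ Set.Icc (0:ℝ) T := ⟨hs0, hst.le.trans ht₀Icc.2⟩
      rcases eq_or_ne z 0 with rfl | hz0
      · simp
      have hsP : g s ∈ P := by
        by_contra hnot
        exact absurd (csInf_le hSbdd ⟨hsIcc, hnot⟩) (not_le.2 hst)
      have hzn : ‖z‖ ≠ 0 := norm_ne_zero_iff.2 hz0
      set u : Fin n → ℝ := ‖z‖⁻¹ • z with hudef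
      have hun : ‖u‖ = 1 := by
        rw [hudef, norm_smul, norm_inv, norm_norm, inv_mul_cancel₀ hzn]
      have hq := (hsP u hun).le
      have hscale : u ⬝ᵥ (g s *ᵥ u) = ‖z‖⁻¹ * ‖z‖⁻¹ * (z ⬝ᵥ (g s *ᵥ z)) := by
        rw [hudef, Matrix.mulVec_smul, smul_dotProduct, dotProduct_smul,
          smul_eq_mul, smul_eq_mul]
        ring
      rw [hscale] at hq
      have h2 : (0:ℝ) < ‖z‖⁻¹ * ‖z‖⁻¹ := by
        have : (0:ℝ) < ‖z‖ := (norm_nonneg z).lt_of_ne (Ne.symm hzn)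
        positivity
      nlinarith
    have hg₀herm : (g t₀).IsHermitian := by
      rw [Matrix.IsHermitian, conjTranspose_eq_transpose_of_trivial, hgt t₀ ht₀Icc,
        transpose_add, transpose_smul, transpose_one, hsymm t₀ ht₀Icc]
    have hg₀psd : (g t₀).PosSemidef := by
      refine .of_dotProduct_mulVec_nonneg hg₀herm fun z => ?_
      rw [star_trivial]
      have hcont : Continuous fun s => z ⬝ᵥ (g s *ᵥ z) := by
        simp only [dotProduct, mulVec]
        exact continuous_finset_sum _ fun i _ => continuous_const.mul
          (continuous_finset_sum _ fun j _ => (hgcont.matrix_elem i j).mul continuous_const)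
      have htend : Filter.Tendsto (fun s => z ⬝ᵥ (g s *ᵥ z)) (𝓝[<] t₀)
          (𝓝 (z ⬝ᵥ (g t₀ *ᵥ z))) := (hcont.tendsto t₀).mono_left nhdsWithin_le_nhds
      refine ge_of_tendsto htend ?_
      filter_upwards [Ioo_mem_nhdsLT_of_mem (Set.mem_Ioc.2 ⟨ht₀pos, le_refl t₀⟩)] with s hs
      exact hbefore s hs.1.le hs.2 z
    obtain ⟨x, hxn, hxle⟩ : ∃ x : Fin n → ℝ, ‖x‖ = 1 ∧ x ⬝ᵥ (g t₀ *ᵥ x) ≤ 0 := by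
      have h2 := ht₀S.2
      simp only [Set.mem_preimage, Set.mem_compl_iff, hPdef, Set.mem_setOf_eq] at h2
      push_neg at h2
      obtain ⟨x, hx1, hx2⟩ := h2
      exact ⟨x, hx1, hx2⟩
    have hxzero : x ⬝ᵥ (g t₀ *ᵥ x) = 0 :=
      le_antisymm hxle (by simpa using hg₀psd.dotProduct_mulVec_nonneg x)
    have hker : g t₀ *ᵥ x = 0 :=
      (hg₀psd.dotProduct_mulVec_zero_iff x).1 (by rw [star_trivial]; exact hxzero)
    set Ec : ℝ := ε * Real.exp (c * t₀) with hEcdef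
    have hEcpos : 0 < Ec := by
      have := Real.exp_pos (c * t₀); rw [hEcdef]; positivity
    have hFx : F t₀ *ᵥ x = -(Ec • x) := by
      have h2 := hker
      rw [hgt t₀ ht₀Icc, Matrix.add_mulVec, Matrix.smul_mulVec, Matrix.one_mulVec] at h2
      have := eq_neg_of_add_eq_zero_left h2
      rw [this]
    set y : Fin q → Fin n → ℝ := fun i => (N i)ᵀ *ᵥ x with hydef
    set h : ℝ → ℝ := fun s => x ⬝ᵥ (F s *ᵥ x) + ε * Real.exp (c * s) * (x ⬝ᵥ x) with hhdef
    set D : ℝ := x ⬝ᵥ (lyapM A A N N K (F t₀) *ᵥ x)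
      + ε * (Real.exp (c * t₀) * c) * (x ⬝ᵥ x) with hDdef
    have hDer : HasDerivAt h D t₀ := by
      apply HasDerivAt.add
      · have hrw : (fun s => x ⬝ᵥ (F s *ᵥ x)) = fun s => ∑ i, ∑ j, F s i j * (x i * x j) :=
          funext fun s => quad_eq _ _
        have hrw2 : x ⬝ᵥ (lyapM A A N N K (F t₀) *ᵥ x)
            = ∑ i, ∑ j, lyapM A A N N K (F t₀) i j * (x i * x j) := quad_eq _ _
        rw [hrw, hrw2]
        exact HasDerivAt.fun_sum fun i _ => HasDerivAt.fun_sum fun j _ =>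
          (hF t₀ ht₀Icc i j).mul_const _
      · have h2 : HasDerivAt (fun s : ℝ => c * s) c t₀ := by
          simpa using (hasDerivAt_id t₀).const_mul c
        exact ((h2.exp.const_mul ε).mul_const _)
    -- computing the quadratic form of the Lyapunov operator
    have hxvF : x ᵥ* F t₀ = F t₀ *ᵥ x := by
      conv_lhs => rw [← hsymm t₀ ht₀Icc]
      exact vecMul_transpose _ _
    have hterm1 : x ⬝ᵥ ((A * F t₀) *ᵥ x) = -(Ec * (x ⬝ᵥ (A *ᵥ x))) := by
      rw [← Matrix.mulVec_mulVec, hFx, Matrix.mulVec_neg, Matrix.mulVec_smul,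
        dotProduct_neg, dotProduct_smul, smul_eq_mul]
    have hterm2 : x ⬝ᵥ ((F t₀ * Aᵀ) *ᵥ x) = -(Ec * (x ⬝ᵥ (Aᵀ *ᵥ x))) := by
      rw [← Matrix.mulVec_mulVec, Matrix.dotProduct_mulVec, hxvF, hFx,
        neg_dotProduct, smul_dotProduct, smul_eq_mul]
    have hFg : F t₀ = g t₀ - Ec • 1 := by
      rw [hgt t₀ ht₀Icc]
      abel
    have hterm3 : ∀ i j, x ⬝ᵥ ((N i * F t₀ * (N j)ᵀ) *ᵥ x)
        = y i ⬝ᵥ (g t₀ *ᵥ y j) - Ec * (x ⬝ᵥ ((N i * (N j)ᵀ) *ᵥ x)) := by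
      intro i j
      have e1 : (N i * F t₀ * (N j)ᵀ) *ᵥ x = N i *ᵥ (F t₀ *ᵥ y j) := by
        rw [hydef]
        simp only
        rw [Matrix.mulVec_mulVec, Matrix.mulVec_mulVec, Matrix.mul_assoc]
      have e2 : (N i * (N j)ᵀ) *ᵥ x = N i *ᵥ y j := by
        rw [hydef]; simp only; rw [Matrix.mulVec_mulVec]
      have e3 : x ᵥ* N i = y i := by rw [hydef]; simp only [mulVec_transpose]
      rw [e1, Matrix.dotProduct_mulVec, e3]
      have e4 : F t₀ *ᵥ y j = g t₀ *ᵥ y j - Ec • y j := by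
        rw [hFg, Matrix.sub_mulVec, Matrix.smul_mulVec, Matrix.one_mulVec]
      rw [e4, dotProduct_sub, dotProduct_smul, smul_eq_mul, e2,
        Matrix.dotProduct_mulVec x (N i) (y j), e3]
    have hexp : x ⬝ᵥ (lyapM A A N N K (F t₀) *ᵥ x)
        = x ⬝ᵥ ((A * F t₀) *ᵥ x) + x ⬝ᵥ ((F t₀ * Aᵀ) *ᵥ x)
          + ∑ i, ∑ j, K i j * (x ⬝ᵥ ((N i * F t₀ * (N j)ᵀ) *ᵥ x)) := by
      rw [lyapM, Matrix.add_mulVec, Matrix.add_mulVec, dotProduct_add, dotProduct_add]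
      congr 1
      rw [dot_sum_mulVec]
      refine Finset.sum_congr rfl fun i _ => ?_
      rw [dot_sum_mulVec]
      refine Finset.sum_congr rfl fun j _ => ?_
      rw [Matrix.smul_mulVec, dotProduct_smul, smul_eq_mul]
    have hM₀exp : x ⬝ᵥ (M₀ *ᵥ x)
        = x ⬝ᵥ (A *ᵥ x) + x ⬝ᵥ (Aᵀ *ᵥ x)
          + ∑ i, ∑ j, K i j * (x ⬝ᵥ ((N i * (N j)ᵀ) *ᵥ x)) := by
      rw [hM₀def, Matrix.add_mulVec, Matrix.add_mulVec, dotProduct_add, dotProduct_add]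
      congr 1
      rw [dot_sum_mulVec]
      refine Finset.sum_congr rfl fun i _ => ?_
      rw [dot_sum_mulVec]
      refine Finset.sum_congr rfl fun j _ => ?_
      rw [Matrix.smul_mulVec, dotProduct_smul, smul_eq_mul]
    have hsum3 : ∑ i, ∑ j, K i j * (x ⬝ᵥ ((N i * F t₀ * (N j)ᵀ) *ᵥ x))
        = (∑ i, ∑ j, K i j * (y i ⬝ᵥ (g t₀ *ᵥ y j)))
          - Ec * ∑ i, ∑ j, K i j * (x ⬝ᵥ ((N i * (N j)ᵀ) *ᵥ x)) := by
      rw [Finset.mul_sum, ← Finset.sum_sub_distrib]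
      refine Finset.sum_congr rfl fun i _ => ?_
      rw [Finset.mul_sum, ← Finset.sum_sub_distrib]
      refine Finset.sum_congr rfl fun j _ => ?_
      rw [hterm3 i j]
      ring
    have hS₀ : 0 ≤ ∑ i, ∑ j, K i j * (y i ⬝ᵥ (g t₀ *ᵥ y j)) := mixedPos hK hg₀psd y
    have hDpos : 0 < D := by
      have hd1 := dot_self_ge_one hxn
      have hb := hM₀bound x hxn
      rw [hDdef, hexp, hterm1, hterm2, hsum3]
      rw [hM₀exp] at hb
      have hEc2 : ε * (Real.exp (c * t₀) * c) = Ec * c := by rw [hEcdef]; ring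
      rw [hEc2]
      have h1 : Ec * (x ⬝ᵥ (A *ᵥ x)) + Ec * (x ⬝ᵥ (Aᵀ *ᵥ x))
          + Ec * ∑ i, ∑ j, K i j * (x ⬝ᵥ ((N i * (N j)ᵀ) *ᵥ x)) ≤ Ec * c - Ec := by
        have h0 := mul_le_mul_of_nonneg_left hb hEcpos.le
        calc Ec * (x ⬝ᵥ (A *ᵥ x)) + Ec * (x ⬝ᵥ (Aᵀ *ᵥ x))
              + Ec * ∑ i, ∑ j, K i j * (x ⬝ᵥ ((N i * (N j)ᵀ) *ᵥ x))
            = Ec * ((x ⬝ᵥ (A *ᵥ x)) + (x ⬝ᵥ (Aᵀ *ᵥ x))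
              + ∑ i, ∑ j, K i j * (x ⬝ᵥ ((N i * (N j)ᵀ) *ᵥ x))) := by ring
          _ ≤ Ec * (c - 1) := h0
          _ = Ec * c - Ec := by ring
      have h2 : Ec * c ≤ Ec * c * (x ⬝ᵥ x) := by
        have := mul_le_mul_of_nonneg_left hd1 (mul_pos hEcpos hcpos).le
        rwa [mul_one] at this
      linarith
    -- slope contradiction
    have hzero : h t₀ = 0 := by
      rw [hhdef]
      simp only
      rw [← hgq t₀ ht₀Icc x]
      exact hxzero
    have hslope : Filter.Tendsto (slope h t₀) (𝓝[<] t₀) (𝓝 D) :=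
      (hasDerivAt_iff_tendsto_slope.1 hDer).mono_left
        (nhdsWithin_mono _ fun s hs => ne_of_lt hs)
    have hev : ∀ᶠ s in 𝓝[<] t₀, slope h t₀ s ≤ 0 := by
      filter_upwards [Ioo_mem_nhdsLT_of_mem (Set.mem_Ioc.2 ⟨ht₀pos, le_refl t₀⟩)] with s hs
      have hsIcc : s ∈ Set.Icc (0:ℝ) T := ⟨hs.1.le, hs.2.le.trans ht₀Icc.2⟩
      have hpos : 0 ≤ h s := by
        rw [hhdef]
        simp only
        rw [← hgq s hsIcc x]
        exact hbefore s hs.1.le hs.2 x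
      have hlt : s - t₀ < 0 := by linarith [hs.2]
      have : (h s - h t₀) / (s - t₀) ≤ 0 :=
        div_nonpos_iff.2 (Or.inl ⟨by rw [hzero]; linarith, hlt.le⟩)
      rw [slope_def_field]
      exact this
    have hD0 : D ≤ 0 := le_of_tendsto hslope hev
    linarith
  -- conclusion
  intro t ht
  have hherm : (F t).IsHermitian := by
    rw [Matrix.IsHermitian, conjTranspose_eq_transpose_of_trivial]
    exact hsymm t ht
  refine .of_dotProduct_mulVec_nonneg hherm fun x => ?_
  rw [star_trivial]
  rcases eq_or_ne x 0 with rfl | hx0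
  · simp
  by_contra hneg
  push_neg at hneg
  have hxn : ‖x‖ ≠ 0 := norm_ne_zero_iff.2 hx0
  set u : Fin n → ℝ := ‖x‖⁻¹ • x with hudef
  have hun : ‖u‖ = 1 := by
    rw [hudef, norm_smul, norm_inv, norm_norm, inv_mul_cancel₀ hxn]
  have hscale : u ⬝ᵥ (F t *ᵥ u) = ‖x‖⁻¹ * ‖x‖⁻¹ * (x ⬝ᵥ (F t *ᵥ x)) := by
    rw [hudef, Matrix.mulVec_smul, smul_dotProduct, dotProduct_smul, smul_eq_mul, smul_eq_mul]
    ring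
  have hinv : (0:ℝ) < ‖x‖⁻¹ * ‖x‖⁻¹ := by
    have : (0:ℝ) < ‖x‖ := (norm_nonneg x).lt_of_ne (Ne.symm hxn)
    positivity
  have huneg : u ⬝ᵥ (F t *ᵥ u) < 0 := by
    rw [hscale]
    nlinarith
  set a : ℝ := -(u ⬝ᵥ (F t *ᵥ u)) with hadef
  have hapos : 0 < a := by rw [hadef]; linarith
  set E : ℝ := Real.exp (c * t) with hEdef
  have hEpos : 0 < E := Real.exp_pos _
  have huu : (1:ℝ) ≤ u ⬝ᵥ u := dot_self_ge_one hun
  set ε : ℝ := a / (E * (u ⬝ᵥ u) + 1) with hεdef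
  have hden : (0:ℝ) < E * (u ⬝ᵥ u) + 1 := by nlinarith
  have hεpos : 0 < ε := div_pos hapos hden
  have hmain := main ε hεpos t ht u hun
  rw [Matrix.add_mulVec, dotProduct_add, Matrix.smul_mulVec, Matrix.one_mulVec,
    dotProduct_smul, smul_eq_mul] at hmain
  have hεeq : ε * (E * (u ⬝ᵥ u) + 1) = a := div_mul_cancel₀ a (ne_of_gt hden)
  rw [← hEdef] at hmain
  nlinarith
end

section
/- Assume the reduced matrices have projection form: Â = (WᵀV)⁻¹WᵀAV, N̂_i = (WᵀV)⁻¹WᵀN_iV, X̂₀ = (WᵀV)⁻¹WᵀX₀, Ĉ = CV, where V, W ∈ ℝ^{n×n̂} and WᵀV is invertible. Then the identities Ĉ P̂(T) − C P̃(T) = C ∫₀ᵀ (V F̂(t) − F̃(t)) dt and X̂₀ᵀ Q̂(T) − X₀ᵀ Q̃(T) = X₀ᵀ ∫₀ᵀ (W(VᵀW)⁻¹ Ĝ(t) − G̃(t)) dt hold. Consequently, condition (a), Ĉ P̂(T) = C P̃(T), holds if and only if C ∫₀ᵀ (V F̂(t) − F̃(t)) dt = 0, and condition (b), Q̂(T)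 X̂₀ = Q̃(T)ᵀ X₀, holds if and only if X₀ᵀ ∫₀ᵀ (W(VᵀW)⁻¹ Ĝ(t) − G̃(t)) dt = 0. -/
open Matrix MeasureTheory Filter
open scoped Kronecker Topology

section Aux

variable {a b c : Type*} [Fintype a] [Fintype b] {q : ℕ}

lemma lyapAdjM_add (A₁ : Matrix a a ℝ) (A₂ : Matrix b b ℝ)
    (N₁ : Fin q → Matrix a a ℝ) (N₂ : Fin q → Matrix b b ℝ)
    (K : Matrix (Fin q) (Fin q) ℝ) (X Y : Matrix a b ℝ) :
    lyapAdjM A₁ A₂ N₁ N₂ K (X + Y) =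
      lyapAdjM A₁ A₂ N₁ N₂ K X + lyapAdjM A₁ A₂ N₁ N₂ K Y := by
  simp only [lyapAdjM, Matrix.mul_add, Matrix.add_mul, smul_add, Finset.sum_add_distrib]
  abel

lemma lyapAdjM_smul (A₁ : Matrix a a ℝ) (A₂ : Matrix b b ℝ)
    (N₁ : Fin q → Matrix a a ℝ) (N₂ : Fin q → Matrix b b ℝ)
    (K : Matrix (Fin q) (Fin q) ℝ) (r : ℝ) (X : Matrix a b ℝ) :
    lyapAdjM A₁ A₂ N₁ N₂ K (r • X) = r • lyapAdjM A₁ A₂ N₁ N₂ K X := by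
  simp only [lyapAdjM, Matrix.mul_smul, Matrix.smul_mul, smul_add, Finset.smul_sum,
    smul_comm r]

lemma lyapAdjM_transpose (A : Matrix b b ℝ) (N : Fin q → Matrix b b ℝ)
    (K : Matrix (Fin q) (Fin q) ℝ) (hK : K.IsSymm) (X : Matrix b b ℝ) :
    (lyapAdjM A A N N K X)ᵀ = lyapAdjM A A N N K Xᵀ := by
  simp only [lyapAdjM, Matrix.transpose_add, Matrix.transpose_sum, Matrix.transpose_smul,
    Matrix.transpose_mul, Matrix.transpose_transpose, Matrix.mul_assoc]
  have hs : ∑ i, ∑ j, K i j • ((N j)ᵀ * (Xᵀ * N i)) =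
      ∑ i, ∑ j, K i j • ((N i)ᵀ * (Xᵀ * N j)) := by
    rw [Finset.sum_comm]
    exact Finset.sum_congr rfl fun i _ => Finset.sum_congr rfl fun j _ => by
      rw [hK.apply]
  rw [hs]
  abel

/-- `lyapAdjM A A N N K` as a linear map on the Pi type. -/
noncomputable def lyapAdjL (A : Matrix b b ℝ) (N : Fin q → Matrix b b ℝ)
    (K : Matrix (Fin q) (Fin q) ℝ) : (b × b → ℝ) →ₗ[ℝ] (b × b → ℝ) where
  toFun x := fun p => lyapAdjM A A N N K (Matrix.of fun i j => x (i, j)) p.1 p.2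
  map_add' x y := by
    funext p
    show lyapAdjM A A N N K (Matrix.of fun i j => (x + y) (i, j)) p.1 p.2 =
      lyapAdjM A A N N K (Matrix.of fun i j => x (i, j)) p.1 p.2 +
        lyapAdjM A A N N K (Matrix.of fun i j => y (i, j)) p.1 p.2
    have h : (Matrix.of fun i j => (x + y) (i, j)) =
        (Matrix.of fun i j => x (i, j)) + (Matrix.of fun i j => y (i, j)) := rfl
    rw [h, lyapAdjM_add]
    rfl
  map_smul' r x := by
    funext p
    show lyapAdjM A A N N K (Matrix.of fun i j => (r • x) (i, j)) p.1 p.2 =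
      r • lyapAdjM A A N N K (Matrix.of fun i j => x (i, j)) p.1 p.2
    have h : (Matrix.of fun i j => (r • x) (i, j)) =
        r • (Matrix.of fun i j => x (i, j)) := rfl
    rw [h, lyapAdjM_smul]
    rfl

/-- Symmetry is preserved along solutions of the adjoint Lyapunov ODE. -/
lemma ode_symm [DecidableEq b] (A : Matrix b b ℝ) (N : Fin q → Matrix b b ℝ)
    (K : Matrix (Fin q) (Fin q) ℝ) (hK : K.IsSymm) (T : ℝ)
    (G : ℝ → Matrix b b ℝ) (hG : solvesODE (lyapAdjM A A N N K) G T)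
    (hG0 : (G 0)ᵀ = G 0) : ∀ t ∈ Set.Icc (0:ℝ) T, (G t)ᵀ = G t := by
  rcases le_or_gt 0 T with hT | hT
  swap
  · intro t ht; exact absurd (ht.1.trans ht.2) (not_le.2 hT)
  set L := LinearMap.toContinuousLinearMap (lyapAdjL A N K) with hL
  set f : ℝ → (b × b → ℝ) := fun t p => G t p.1 p.2 with hf
  set g : ℝ → (b × b → ℝ) := fun t p => G t p.2 p.1 with hg
  have hderf : ∀ t ∈ Set.Icc (0:ℝ) T, HasDerivAt f (L (f t)) t := by
    intro t ht
    rw [hasDerivAt_pi]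
    intro p
    exact hG t ht p.1 p.2
  have hLg : ∀ t, L (g t) = fun p : b × b => lyapAdjM A A N N K (G t) p.2 p.1 := by
    intro t
    funext p
    show lyapAdjM A A N N K (G t)ᵀ p.1 p.2 = _
    rw [← lyapAdjM_transpose A N K hK]
    rfl
  have hderg : ∀ t ∈ Set.Icc (0:ℝ) T, HasDerivAt g (L (g t)) t := by
    intro t ht
    rw [hLg, hasDerivAt_pi]
    intro p
    exact hG t ht p.2 p.1
  have key : Set.EqOn f g (Set.Icc 0 T) := by
    refine ODE_solution_unique (v := fun _ x => L x) (K := ‖L‖₊)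
      (fun _ => L.lipschitz)
      (fun t ht => (hderf t ht).continuousAt.continuousWithinAt)
      (fun t ht => (hderf t (Set.Ico_subset_Icc_self ht)).hasDerivWithinAt)
      (fun t ht => (hderg t ht).continuousAt.continuousWithinAt)
      (fun t ht => (hderg t (Set.Ico_subset_Icc_self ht)).hasDerivWithinAt) ?_
    funext p
    exact (congrFun (congrFun hG0 p.1) p.2).symm
  intro t ht
  ext i j
  exact congrFun (key ht) (j, i)

/-- Entries of an ODE solution are interval integrable. -/
lemma solvesODE_integrable {L : Matrix a b ℝ → Matrix a b ℝ} {F : ℝ → Matrix a b ℝ}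
    {T : ℝ} (hT : 0 ≤ T) (hF : solvesODE L F T) (i : a) (j : b) :
    IntervalIntegrable (fun t => F t i j) volume 0 T := by
  apply ContinuousOn.intervalIntegrable
  rw [Set.uIcc_of_le hT]
  exact fun t ht => ((hF t ht i j).continuousAt).continuousWithinAt

lemma intM_mul_sub [Fintype c] (M : Matrix c a ℝ) (F : ℝ → Matrix a b ℝ)
    (G : ℝ → Matrix c b ℝ) (T : ℝ)
    (hF : ∀ i j, IntervalIntegrable (fun t => F t i j) volume 0 T)
    (hG : ∀ i j, IntervalIntegrable (fun t => G t i j) volume 0 T) :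
    intM (fun t => M * F t - G t) T = M * intM F T - intM G T := by
  ext i j
  have h1 : ∀ k : a, IntervalIntegrable (fun t => M i k * F t k j) volume 0 T :=
    fun k => (hF k j).const_mul _
  have h2 : IntervalIntegrable (fun t => ∑ k, M i k * F t k j) volume 0 T := by
    have h := IntervalIntegrable.sum (μ := volume) (a := (0:ℝ)) (b := T) Finset.univ
      (f := fun k t => M i k * F t k j) (fun k _ => h1 k)
    have heq : (fun t => ∑ k, M i k * F t k j) = ∑ k : a, (fun t => M i k * F t k j) := by
      funext t; simp
    rw [heq]
    exact h
  show (∫ t in (0:ℝ)..T, (M * F t - G t) i j) = _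
  simp only [Matrix.sub_apply, Matrix.mul_apply]
  rw [intervalIntegral.integral_sub h2 (hG i j),
    intervalIntegral.integral_finset_sum (fun k _ => h1 k)]
  simp only [intM, Matrix.sub_apply, Matrix.mul_apply, Matrix.of_apply,
    intervalIntegral.integral_const_mul]

end Aux

/-- eq. (3.5): for projection-form reduced matrices, the gaps in
optimality conditions (a) and (b) are the time-averaged covariance errors; in
particular (a) holds iff `C ∫₀ᵀ (V F̂ − F̃) dt = 0` and (b) holds iff
`X₀ᵀ ∫₀ᵀ (W (VᵀW)⁻¹ Ĝ − G̃) dt = 0`. -/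
theorem stmt_6 {n nh m p q : ℕ} (T : ℝ) (hT : 0 < T)
    (A : Matrix (Fin n) (Fin n) ℝ) (N : Fin q → Matrix (Fin n) (Fin n) ℝ)
    (K : Matrix (Fin q) (Fin q) ℝ) (hK : K.IsSymm)
    (X₀ : Matrix (Fin n) (Fin m) ℝ) (C : Matrix (Fin p) (Fin n) ℝ)
    (V W : Matrix (Fin n) (Fin nh) ℝ) (hWV : IsUnit (Wᵀ * V))
    (Ahat : Matrix (Fin nh) (Fin nh) ℝ) (Nhat : Fin q → Matrix (Fin nh) (Fin nh) ℝ)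
    (X0hat : Matrix (Fin nh) (Fin m) ℝ) (Chat : Matrix (Fin p) (Fin nh) ℝ)
    (hAhat : Ahat = (Wᵀ * V)⁻¹ * Wᵀ * A * V)
    (hNhat : ∀ i, Nhat i = (Wᵀ * V)⁻¹ * Wᵀ * N i * V)
    (hX0hat : X0hat = (Wᵀ * V)⁻¹ * Wᵀ * X₀)
    (hChat : Chat = C * V)
    (Fhat : ℝ → Matrix (Fin nh) (Fin nh) ℝ)
    (hFhat : solvesODE (lyapM Ahat Ahat Nhat Nhat K) Fhat T)
    (hFhat0 : Fhat 0 = X0hat * X0hatᵀ)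
    (Ftil : ℝ → Matrix (Fin n) (Fin nh) ℝ)
    (hFtil : solvesODE (lyapM A Ahat N Nhat K) Ftil T)
    (hFtil0 : Ftil 0 = X₀ * X0hatᵀ)
    (Ghat : ℝ → Matrix (Fin nh) (Fin nh) ℝ)
    (hGhat : solvesODE (lyapAdjM Ahat Ahat Nhat Nhat K) Ghat T)
    (hGhat0 : Ghat 0 = Chatᵀ * Chat)
    (Gtil : ℝ → Matrix (Fin n) (Fin nh) ℝ)
    (hGtil : solvesODE (lyapAdjM A Ahat N Nhat K) Gtil T)
    (hGtil0 : Gtil 0 = Cᵀ * Chat) :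
    (Chat * intM Fhat T - C * intM Ftil T = C * intM (fun t => V * Fhat t - Ftil t) T)
    ∧ (X0hatᵀ * intM Ghat T - X₀ᵀ * intM Gtil T =
        X₀ᵀ * intM (fun t => W * (Vᵀ * W)⁻¹ * Ghat t - Gtil t) T)
    ∧ (Chat * intM Fhat T = C * intM Ftil T ↔
        C * intM (fun t => V * Fhat t - Ftil t) T = 0)
    ∧ (intM Ghat T * X0hat = (intM Gtil T)ᵀ * X₀ ↔
        X₀ᵀ * intM (fun t => W * (Vᵀ * W)⁻¹ * Ghat t - Gtil t) T = 0) := by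
  have hFhatInt := fun i j => solvesODE_integrable hT.le hFhat i j
  have hFtilInt := fun i j => solvesODE_integrable hT.le hFtil i j
  have hGhatInt := fun i j => solvesODE_integrable hT.le hGhat i j
  have hGtilInt := fun i j => solvesODE_integrable hT.le hGtil i j
  -- first identity
  have e1 : Chat * intM Fhat T - C * intM Ftil T =
      C * intM (fun t => V * Fhat t - Ftil t) T := by
    rw [intM_mul_sub V Fhat Ftil T hFhatInt hFtilInt, Matrix.mul_sub, ← Matrix.mul_assoc,
      ← hChat]
  -- transpose of X0hat
  have hX0T : X0hatᵀ = X₀ᵀ * (W * (Vᵀ * W)⁻¹) := by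
    rw [hX0hat]
    simp [Matrix.transpose_mul, Matrix.transpose_nonsing_inv, Matrix.transpose_transpose,
      Matrix.mul_assoc]
  -- second identity
  have e2 : X0hatᵀ * intM Ghat T - X₀ᵀ * intM Gtil T =
      X₀ᵀ * intM (fun t => W * (Vᵀ * W)⁻¹ * Ghat t - Gtil t) T := by
    rw [intM_mul_sub (W * (Vᵀ * W)⁻¹) Ghat Gtil T hGhatInt hGtilInt, Matrix.mul_sub,
      ← Matrix.mul_assoc, ← hX0T]
  -- symmetry of Ghat
  have hG0symm : (Ghat 0)ᵀ = Ghat 0 := by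
    rw [hGhat0, Matrix.transpose_mul, Matrix.transpose_transpose]
  have hsymm := ode_symm Ahat Nhat K hK T Ghat hGhat hG0symm
  have hQsym : (intM Ghat T)ᵀ = intM Ghat T := by
    ext i j
    show (∫ t in (0:ℝ)..T, Ghat t j i) = ∫ t in (0:ℝ)..T, Ghat t i j
    apply intervalIntegral.integral_congr
    intro t ht
    rw [Set.uIcc_of_le hT.le] at ht
    have h := hsymm t ht
    exact congrFun (congrFun h i) j
  refine ⟨e1, e2, ?_, ?_⟩
  · rw [← e1, sub_eq_zero]
  · rw [← e2, sub_eq_zero]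
    constructor
    · intro h
      have h' := congrArg Matrix.transpose h
      simpa [Matrix.transpose_mul, hQsym] using h'
    · intro h
      have h' := congrArg Matrix.transpose h
      simpa [Matrix.transpose_mul, hQsym] using h'
end

section
/- Let S ∈ ℝ^{n̂×n̂} be invertible and set Ã = SÂS⁻¹, X̃₀ = SX̂₀, C̃ = ĈS⁻¹, Ñ_i = SN̂_iS⁻¹. Let X : [0,T] → ℝ^{n×n̂} and Y : [0,T] → ℝ^{n×n̂} be the unique solutions of X'(t) = AX(t) + X(t)Ãᵀ + Σ_{i,j=1}^q N_i X(t) Ñ_jᵀ k_{ij}, X(0) = X₀X̃₀ᵀ, and Y'(t) = AᵀY(t) + Y(t)Ã + Σ_{i,j=1}^q N_iᵀ Y(t) Ñ_j k_{ij}, Y(0) = CᵀC̃. Suppose V = (∫₀ᵀ X(t)dt) M_V and W = (∫₀ᵀ Y(t)dt) M_W for invertible M_V, M_W ∈ ℝ^{n̂×n̂}, that WᵀV is invertible, that the reduced matrices satisfy the fixed-point (projection) relations Â = (WᵀV)⁻¹WᵀAV, N̂_i = (WᵀV)⁻¹WᵀN_iV, X̂₀ = (WᵀV)⁻¹WᵀX₀,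 Ĉ = CV, and that L̂ is invertible. Then: (i) V P̂(T) − P̃(T) = V · L̂⁻¹[ F̂(T) − (WᵀV)⁻¹Wᵀ F̃(T) ]; (ii) W(VᵀW)⁻¹ Q̂(T) − Q̃(T) = W(VᵀW)⁻¹ · (L̂*)⁻¹[ Ĝ(T) − Vᵀ G̃(T) ]. -/
open Matrix MeasureTheory Filter
open scoped Kronecker Topology

set_option linter.unusedSectionVars false

section
variable {a b : Type*} [Fintype a] [Fintype b] [DecidableEq a] [DecidableEq b] {q : ℕ}
variable (A₁ : Matrix a a ℝ) (A₂ : Matrix b b ℝ)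
variable (N₁ : Fin q → Matrix a a ℝ) (N₂ : Fin q → Matrix b b ℝ)
variable (K : Matrix (Fin q) (Fin q) ℝ) (X : Matrix a b ℝ)

lemma unvec_vec : unvecM (vecM X) = X := rfl
lemma vec_unvec (v : b × a → ℝ) : vecM (unvecM v) = v := rfl

lemma mulVec_oneKron (c : b) (r : a) :
    (((1 : Matrix b b ℝ) ⊗ₖ A₁) *ᵥ vecM X) (c, r) = (A₁ * X) r c := by
  simp [Matrix.mulVec, dotProduct, vecM, Fintype.sum_prod_type, Matrix.one_apply,
    Matrix.mul_apply, ite_mul, zero_mul]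

lemma mulVec_kronOne (c : b) (r : a) :
    ((A₂ ⊗ₖ (1 : Matrix a a ℝ)) *ᵥ vecM X) (c, r) = (X * A₂ᵀ) r c := by
  simp [Matrix.mulVec, dotProduct, vecM, Fintype.sum_prod_type, Matrix.one_apply,
    Matrix.mul_apply, mul_ite, mul_zero, mul_comm]

lemma mulVec_kronNN (M₂ : Matrix b b ℝ) (M₁ : Matrix a a ℝ) (c : b) (r : a) :
    ((M₂ ⊗ₖ M₁) *ᵥ vecM X) (c, r) = (M₁ * X * M₂ᵀ) r c := by
  simp only [Matrix.mulVec, dotProduct, vecM, Fintype.sum_prod_type,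
    Matrix.kroneckerMap_apply, Matrix.mul_apply, Matrix.transpose_apply,
    Finset.sum_mul, Finset.mul_sum]
  refine Finset.sum_congr rfl fun c' _ => Finset.sum_congr rfl fun r' _ => by ring

lemma kron_mulVec (hK : K.IsSymm) (p : b × a) :
    (kronM A₁ A₂ N₁ N₂ K *ᵥ vecM X) p = vecM (lyapM A₁ A₂ N₁ N₂ K X) p := by
  obtain ⟨c, r⟩ := p
  have hsum : ((∑ i, ∑ j, K i j • (N₂ i ⊗ₖ N₁ j)) *ᵥ vecM X) (c, r)
      = ∑ i, ∑ j, K i j * (N₁ j * X * (N₂ i)ᵀ) r c := by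
    simp only [Matrix.mulVec, dotProduct, Matrix.sum_apply, Matrix.smul_apply,
      smul_eq_mul, Finset.sum_mul, Finset.mul_sum]
    rw [Finset.sum_comm]
    refine Finset.sum_congr rfl fun i _ => ?_
    rw [Finset.sum_comm]
    refine Finset.sum_congr rfl fun j _ => ?_
    simp only [mul_assoc, ← Finset.mul_sum]
    congr 1
    rw [← mulVec_kronNN X (N₂ i) (N₁ j) c r]
    simp [Matrix.mulVec, dotProduct, vecM]
  simp only [kronM, Matrix.add_mulVec, Pi.add_apply, lyapM, vecM, Matrix.add_apply,
    Matrix.sum_apply, Matrix.smul_apply, smul_eq_mul]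
  rw [mulVec_oneKron, mulVec_kronOne, hsum]
  congr 1
  rw [Finset.sum_comm]
  exact Finset.sum_congr rfl fun i _ => Finset.sum_congr rfl fun j _ => by rw [hK.apply j i]
end

set_option linter.unusedSectionVars false

section piODE
variable {ι : Type*} [Fintype ι] [DecidableEq ι]

noncomputable def clmOf (Kmat : Matrix ι ι ℝ) : (ι → ℝ) →L[ℝ] (ι → ℝ) :=
  LinearMap.toContinuousLinearMap (Matrix.mulVecLin Kmat)

lemma clmOf_apply (Kmat : Matrix ι ι ℝ) (v : ι → ℝ) : clmOf Kmat v = Kmat *ᵥ v := rfl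

lemma lin_ode_integral (Kmat : Matrix ι ι ℝ) (u : ℝ → ι → ℝ) (T : ℝ) (hT : 0 ≤ T)
    (h : ∀ t ∈ Set.Icc (0:ℝ) T, HasDerivAt u (Kmat *ᵥ u t) t) :
    Kmat *ᵥ (∫ t in (0:ℝ)..T, u t) = u T - u 0 := by
  have hu : ContinuousOn u (Set.Icc 0 T) :=
    fun t ht => ((h t ht).continuousAt).continuousWithinAt
  have huI : IntervalIntegrable u volume 0 T := by
    rw [intervalIntegrable_iff_integrableOn_Icc_of_le hT]
    exact hu.integrableOn_Icc
  have hKu : IntervalIntegrable (fun t => Kmat *ᵥ u t) volume 0 T := by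
    rw [intervalIntegrable_iff_integrableOn_Icc_of_le hT]
    exact (((clmOf Kmat).continuous.comp_continuousOn hu)).integrableOn_Icc
  have ftc : ∫ t in (0:ℝ)..T, Kmat *ᵥ u t = u T - u 0 := by
    refine intervalIntegral.integral_eq_sub_of_hasDerivAt (fun t ht => ?_) hKu
    rw [Set.uIcc_of_le hT] at ht
    exact h t ht
  calc Kmat *ᵥ (∫ t in (0:ℝ)..T, u t) = clmOf Kmat (∫ t in (0:ℝ)..T, u t) := rfl
    _ = ∫ t in (0:ℝ)..T, clmOf Kmat (u t) := ((clmOf Kmat).intervalIntegral_comp_comm huI).symm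
    _ = u T - u 0 := ftc

lemma lin_ode_unique (Kmat : Matrix ι ι ℝ) (u w : ℝ → ι → ℝ) (T : ℝ)
    (hu : ∀ t ∈ Set.Icc (0:ℝ) T, HasDerivAt u (Kmat *ᵥ u t) t)
    (hw : ∀ t ∈ Set.Icc (0:ℝ) T, HasDerivAt w (Kmat *ᵥ w t) t)
    (h0 : u 0 = w 0) : Set.EqOn u w (Set.Icc 0 T) := by
  have hlip : ∀ t : ℝ, LipschitzWith ‖clmOf Kmat‖₊ (fun v : ι → ℝ => Kmat *ᵥ v) := by
    intro t
    exact (clmOf Kmat).lipschitz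
  exact ODE_solution_unique hlip
    (fun t ht => ((hu t ht).continuousAt).continuousWithinAt)
    (fun t ht => ((hu t (Set.Ico_subset_Icc_self ht)).hasDerivWithinAt))
    (fun t ht => ((hw t ht).continuousAt).continuousWithinAt)
    (fun t ht => ((hw t (Set.Ico_subset_Icc_self ht)).hasDerivWithinAt))
    h0
end piODE

section main
variable {a b : Type*} [Fintype a] [Fintype b] [DecidableEq a] [DecidableEq b] {q : ℕ}
variable {A₁ : Matrix a a ℝ} {A₂ : Matrix b b ℝ}
variable {N₁ : Fin q → Matrix a a ℝ} {N₂ : Fin q → Matrix b b ℝ}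
variable {K : Matrix (Fin q) (Fin q) ℝ} {F : ℝ → Matrix a b ℝ} {T : ℝ}

lemma vec_lyap (hK : K.IsSymm) (X : Matrix a b ℝ) :
    vecM (lyapM A₁ A₂ N₁ N₂ K X) = kronM A₁ A₂ N₁ N₂ K *ᵥ vecM X :=
  funext fun p => (kron_mulVec A₁ A₂ N₁ N₂ K X hK p).symm

lemma solvesODE.vecDeriv (hK : K.IsSymm) (h : solvesODE (lyapM A₁ A₂ N₁ N₂ K) F T) :
    ∀ t ∈ Set.Icc (0:ℝ) T, HasDerivAt (fun s => vecM (F s))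
      (kronM A₁ A₂ N₁ N₂ K *ᵥ vecM (F t)) t := by
  intro t ht
  rw [← vec_lyap hK]
  exact hasDerivAt_pi.2 fun p => h t ht p.2 p.1

lemma solvesODE.contOn (L : Matrix a b ℝ → Matrix a b ℝ) (h : solvesODE L F T) (i : a) (j : b) :
    ContinuousOn (fun t => F t i j) (Set.Icc 0 T) :=
  fun t ht => ((h t ht i j).continuousAt).continuousWithinAt

lemma vec_intM (hT : 0 ≤ T)
    (hcont : ∀ i j, ContinuousOn (fun t => F t i j) (Set.Icc 0 T)) :
    vecM (intM F T) = ∫ t in (0:ℝ)..T, vecM (F t) := by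
  have hI : IntervalIntegrable (fun t => vecM (F t)) volume 0 T := by
    rw [intervalIntegrable_iff_integrableOn_Icc_of_le hT]
    exact (continuousOn_pi.2 fun p : b × a => hcont p.2 p.1).integrableOn_Icc
  funext p
  have := ((ContinuousLinearMap.proj (R := ℝ) (φ := fun _ : b × a => ℝ) p).intervalIntegral_comp_comm hI)
  simpa [vecM, intM, ContinuousLinearMap.proj_apply] using this

lemma lyap_intM (hK : K.IsSymm) (hT : 0 ≤ T) (h : solvesODE (lyapM A₁ A₂ N₁ N₂ K) F T) :
    lyapM A₁ A₂ N₁ N₂ K (intM F T) = F T - F 0 := by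
  have key : kronM A₁ A₂ N₁ N₂ K *ᵥ vecM (intM F T)
      = vecM (F T) - vecM (F 0) := by
    rw [vec_intM hT (fun i j => h.contOn _ i j)]
    exact lin_ode_integral _ _ T hT (h.vecDeriv hK)
  have : vecM (lyapM A₁ A₂ N₁ N₂ K (intM F T)) = vecM (F T - F 0) := by
    rw [vec_lyap hK, key]; rfl
  have := congrArg unvecM this
  rwa [unvec_vec, unvec_vec] at this
end main

section more
variable {a b : Type*} [Fintype a] [Fintype b] [DecidableEq a] [DecidableEq b] {q : ℕ}
variable (A₁ : Matrix a a ℝ) (A₂ : Matrix b b ℝ)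
variable (N₁ : Fin q → Matrix a a ℝ) (N₂ : Fin q → Matrix b b ℝ)
variable (K : Matrix (Fin q) (Fin q) ℝ)

lemma lyapAdj_eq :
    lyapAdjM A₁ A₂ N₁ N₂ K
      = lyapM A₁ᵀ A₂ᵀ (fun i => (N₁ i)ᵀ) (fun i => (N₂ i)ᵀ) K := by
  funext X
  simp [lyapAdjM, lyapM, Matrix.transpose_transpose]

lemma kron_transpose :
    (kronM A₁ A₂ N₁ N₂ K)ᵀ
      = kronM A₁ᵀ A₂ᵀ (fun i => (N₁ i)ᵀ) (fun i => (N₂ i)ᵀ) K := by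
  simp only [kronM, Matrix.transpose_add]
  congr 1
  · congr 1 <;> ext p p' <;>
      simp [Matrix.transpose_apply, Matrix.kroneckerMap_apply, Matrix.one_apply, eq_comm]
  · ext p p'
    simp [Matrix.transpose_apply, Matrix.sum_apply, Matrix.kroneckerMap_apply]

lemma lyap_sub (X Y : Matrix a b ℝ) :
    lyapM A₁ A₂ N₁ N₂ K (X - Y) = lyapM A₁ A₂ N₁ N₂ K X - lyapM A₁ A₂ N₁ N₂ K Y := by
  simp only [lyapM, Matrix.mul_sub, Matrix.sub_mul, smul_sub, Finset.sum_sub_distrib]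
  abel

lemma vecM_sub (X Y : Matrix a b ℝ) : vecM (X - Y) = vecM X - vecM Y := rfl

lemma intM_congr {F G : ℝ → Matrix a b ℝ} {T : ℝ} (hT : 0 ≤ T)
    (h : Set.EqOn F G (Set.Icc 0 T)) : intM F T = intM G T := by
  ext i j
  exact intervalIntegral.integral_congr fun t ht => by
    rw [Set.uIcc_of_le hT] at ht; rw [h ht]

lemma intM_mul_const {F : ℝ → Matrix a b ℝ} {T : ℝ} (hT : 0 ≤ T)
    (hcont : ∀ i j, ContinuousOn (fun t => F t i j) (Set.Icc 0 T))
    (M : Matrix b b ℝ) :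
    intM (fun t => F t * M) T = intM F T * M := by
  ext i j
  simp only [intM, Matrix.of_apply, Matrix.mul_apply]
  have hint : ∀ k, IntervalIntegrable (fun t => F t i k * M k j) volume 0 T := by
    intro k
    have : IntervalIntegrable (fun t => F t i k) volume 0 T := by
      rw [intervalIntegrable_iff_integrableOn_Icc_of_le hT]
      exact (hcont i k).integrableOn_Icc
    simpa using this.mul_const (M k j)
  calc (∫ t in (0:ℝ)..T, (F t * M) i j)
      = ∫ t in (0:ℝ)..T, ∑ k, F t i k * M k j :=
        intervalIntegral.integral_congr fun t _ => by simp [Matrix.mul_apply]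
    _ = ∑ k, ∫ t in (0:ℝ)..T, F t i k * M k j :=
        intervalIntegral.integral_finset_sum (fun k _ => hint k)
    _ = ∑ k, (∫ t in (0:ℝ)..T, F t i k) * M k j := by
        refine Finset.sum_congr rfl fun k _ => ?_
        exact intervalIntegral.integral_mul_const _ _

lemma solvesODE_mul_const {L1 L2 : Matrix a b ℝ → Matrix a b ℝ} {F : ℝ → Matrix a b ℝ} {T : ℝ}
    (M : Matrix b b ℝ) (hL : ∀ Z, L2 (Z * M) = L1 Z * M)
    (h : solvesODE L1 F T) : solvesODE L2 (fun t => F t * M) T := by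
  intro t ht i j
  have hd : HasDerivAt (fun s => ∑ k, F s i k * M k j) (∑ k, L1 (F t) i k * M k j) t :=
    HasDerivAt.fun_sum fun k _ => (h t ht i k).mul_const _
  have : (fun s => (F s * M) i j) = fun s => ∑ k, F s i k * M k j := by
    funext s; simp [Matrix.mul_apply]
  rw [this, hL, Matrix.mul_apply]
  exact hd
end more

set_option maxHeartbeats 4000000

/-- Theorem 3.3: at a converged fixed point of the Sylvester iteration,
the time-averaged covariance errors are controlled by the terminal-time covariance
errors via `𝓛̂⁻¹` (resp. `(𝓛̂*)⁻¹`), here expressed through the inverse of the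
Kronecker matrix `𝒦̂` (resp. `𝒦̂ᵀ`). -/
theorem stmt_8 {n nh m p q : ℕ} (T : ℝ) (hT : 0 < T)
    (A : Matrix (Fin n) (Fin n) ℝ) (N : Fin q → Matrix (Fin n) (Fin n) ℝ)
    (K : Matrix (Fin q) (Fin q) ℝ) (hK : K.IsSymm)
    (X₀ : Matrix (Fin n) (Fin m) ℝ) (C : Matrix (Fin p) (Fin n) ℝ)
    (Ahat : Matrix (Fin nh) (Fin nh) ℝ) (Nhat : Fin q → Matrix (Fin nh) (Fin nh) ℝ)
    (X0hat : Matrix (Fin nh) (Fin m) ℝ) (Chat : Matrix (Fin p) (Fin nh) ℝ)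
    (S : Matrix (Fin nh) (Fin nh) ℝ) (hS : IsUnit S)
    (X Y : ℝ → Matrix (Fin n) (Fin nh) ℝ)
    (hX : solvesODE
      (lyapM A (S * Ahat * S⁻¹) N (fun i => S * Nhat i * S⁻¹) K) X T)
    (hX0 : X 0 = X₀ * (S * X0hat)ᵀ)
    (hY : solvesODE
      (lyapAdjM A (S * Ahat * S⁻¹) N (fun i => S * Nhat i * S⁻¹) K) Y T)
    (hY0 : Y 0 = Cᵀ * (Chat * S⁻¹))
    (V W : Matrix (Fin n) (Fin nh) ℝ)
    (MV MW : Matrix (Fin nh) (Fin nh) ℝ) (hMV : IsUnit MV) (hMW : IsUnit MW)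
    (hV : V = intM X T * MV) (hW : W = intM Y T * MW)
    (hWV : IsUnit (Wᵀ * V))
    (hAhat : Ahat = (Wᵀ * V)⁻¹ * Wᵀ * A * V)
    (hNhat : ∀ i, Nhat i = (Wᵀ * V)⁻¹ * Wᵀ * N i * V)
    (hX0hat : X0hat = (Wᵀ * V)⁻¹ * Wᵀ * X₀)
    (hChat : Chat = C * V)
    (hLhat : IsUnit (kronM Ahat Ahat Nhat Nhat K))
    (Fhat : ℝ → Matrix (Fin nh) (Fin nh) ℝ)
    (hFhat : solvesODE (lyapM Ahat Ahat Nhat Nhat K) Fhat T)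
    (hFhat0 : Fhat 0 = X0hat * X0hatᵀ)
    (Ftil : ℝ → Matrix (Fin n) (Fin nh) ℝ)
    (hFtil : solvesODE (lyapM A Ahat N Nhat K) Ftil T)
    (hFtil0 : Ftil 0 = X₀ * X0hatᵀ)
    (Ghat : ℝ → Matrix (Fin nh) (Fin nh) ℝ)
    (hGhat : solvesODE (lyapAdjM Ahat Ahat Nhat Nhat K) Ghat T)
    (hGhat0 : Ghat 0 = Chatᵀ * Chat)
    (Gtil : ℝ → Matrix (Fin n) (Fin nh) ℝ)
    (hGtil : solvesODE (lyapAdjM A Ahat N Nhat K) Gtil T)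
    (hGtil0 : Gtil 0 = Cᵀ * Chat) :
    (V * intM Fhat T - intM Ftil T =
      V * unvecM ((kronM Ahat Ahat Nhat Nhat K)⁻¹ *ᵥ
        vecM (Fhat T - (Wᵀ * V)⁻¹ * Wᵀ * Ftil T)))
    ∧ (W * (Vᵀ * W)⁻¹ * intM Ghat T - intM Gtil T =
        W * (Vᵀ * W)⁻¹ * unvecM (((kronM Ahat Ahat Nhat Nhat K)ᵀ)⁻¹ *ᵥ
          vecM (Ghat T - Vᵀ * Gtil T))) := by
  have hT0 : (0:ℝ) ≤ T := hT.le
  have hdS : IsUnit S.det := (Matrix.isUnit_iff_isUnit_det S).mp hS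
  have hdSt : IsUnit Sᵀ.det := by rwa [Matrix.det_transpose]
  have hdMV : IsUnit MV.det := (Matrix.isUnit_iff_isUnit_det MV).mp hMV
  have hdMW : IsUnit MW.det := (Matrix.isUnit_iff_isUnit_det MW).mp hMW
  have hdWV : IsUnit (Wᵀ * V).det := (Matrix.isUnit_iff_isUnit_det _).mp hWV
  have hVWt : Vᵀ * W = (Wᵀ * V)ᵀ := by
    rw [Matrix.transpose_mul, Matrix.transpose_transpose]
  have hdVW : IsUnit (Vᵀ * W).det := by rw [hVWt, Matrix.det_transpose]; exact hdWV
  have hSS : S * S⁻¹ = 1 := Matrix.mul_nonsing_inv S hdS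
  have hS'S : S⁻¹ * S = 1 := Matrix.nonsing_inv_mul S hdS
  set P : Matrix (Fin nh) (Fin n) ℝ := (Wᵀ * V)⁻¹ * Wᵀ with hPdef
  set Q : Matrix (Fin n) (Fin nh) ℝ := W * (Vᵀ * W)⁻¹ with hQdef
  have hPV : P * V = 1 := by
    rw [hPdef, Matrix.mul_assoc]; exact Matrix.nonsing_inv_mul _ hdWV
  have hPQ : Pᵀ = Q := by
    rw [hPdef, hQdef, Matrix.transpose_mul, Matrix.transpose_transpose,
      Matrix.transpose_nonsing_inv, ← hVWt]
  have hVQ : Vᵀ * Q = 1 := by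
    rw [← hPQ, ← Matrix.transpose_mul, hPV, Matrix.transpose_one]
  -- Part (i)
  have hFhatI : lyapM Ahat Ahat Nhat Nhat K (intM Fhat T) = Fhat T - Fhat 0 :=
    lyap_intM hK hT0 hFhat
  have hFtilI : lyapM A Ahat N Nhat K (intM Ftil T) = Ftil T - Ftil 0 :=
    lyap_intM hK hT0 hFtil
  have hStc : Sᵀ * (S⁻¹)ᵀ = 1 := by rw [← Matrix.transpose_mul, hS'S, Matrix.transpose_one]
  have hconj : ∀ Z : Matrix (Fin n) (Fin nh) ℝ,
      lyapM A (S * Ahat * S⁻¹) N (fun i => S * Nhat i * S⁻¹) K (Z * Sᵀ)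
        = lyapM A Ahat N Nhat K Z * Sᵀ := by
    intro Z
    have hc : ∀ (M : Matrix (Fin nh) (Fin nh) ℝ) (Y' : Matrix (Fin n) (Fin nh) ℝ),
        Y' * Sᵀ * (S * M * S⁻¹)ᵀ = Y' * Mᵀ * Sᵀ := by
      intro M Y'
      rw [Matrix.transpose_mul, Matrix.transpose_mul]
      rw [show Y' * Sᵀ * ((S⁻¹)ᵀ * (Mᵀ * Sᵀ)) = Y' * (Sᵀ * (S⁻¹)ᵀ) * Mᵀ * Sᵀ by
        simp only [Matrix.mul_assoc], hStc, Matrix.mul_one]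
    simp only [lyapM, Matrix.add_mul, Matrix.sum_mul, Matrix.smul_mul]
    rw [← Matrix.mul_assoc A Z Sᵀ, hc Ahat Z]
    congr 1
    refine Finset.sum_congr rfl fun i _ => Finset.sum_congr rfl fun j _ => ?_
    rw [← Matrix.mul_assoc (N i) Z Sᵀ, hc (Nhat j) (N i * Z), Matrix.mul_assoc]
  have hXg : solvesODE (lyapM A (S * Ahat * S⁻¹) N (fun i => S * Nhat i * S⁻¹) K)
      (fun t => Ftil t * Sᵀ) T := solvesODE_mul_const Sᵀ hconj hFtil
  have h0X : X 0 = Ftil 0 * Sᵀ := by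
    rw [hX0, hFtil0, Matrix.transpose_mul, ← Matrix.mul_assoc]
  have hXFt : ∀ t ∈ Set.Icc (0:ℝ) T, X t = Ftil t * Sᵀ := by
    have huniq := lin_ode_unique (kronM A (S * Ahat * S⁻¹) N (fun i => S * Nhat i * S⁻¹) K)
      (fun t => vecM (X t)) (fun t => vecM (Ftil t * Sᵀ)) T
      (hX.vecDeriv hK) (hXg.vecDeriv hK) (by rw [h0X])
    intro t ht
    exact congrArg unvecM (huniq ht)
  have hintX : intM X T = intM Ftil T * Sᵀ := by
    rw [intM_congr hT0 hXFt]
    exact intM_mul_const hT0 (fun i j => hFtil.contOn _ i j) Sᵀ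
  have hVR : V * (MV⁻¹ * (Sᵀ)⁻¹) = intM Ftil T := by
    rw [hV, hintX]
    rw [show intM Ftil T * Sᵀ * MV * (MV⁻¹ * (Sᵀ)⁻¹)
        = intM Ftil T * Sᵀ * (MV * MV⁻¹) * (Sᵀ)⁻¹ by simp only [Matrix.mul_assoc],
      Matrix.mul_nonsing_inv MV hdMV, Matrix.mul_one, Matrix.mul_assoc,
      Matrix.mul_nonsing_inv Sᵀ hdSt, Matrix.mul_one]
  have hkey : ∀ Z : Matrix (Fin nh) (Fin nh) ℝ,
      P * lyapM A Ahat N Nhat K (V * Z) = lyapM Ahat Ahat Nhat Nhat K Z := by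
    intro Z
    simp only [lyapM, Matrix.mul_add, Matrix.mul_sum, Matrix.mul_smul, hAhat, hNhat,
      ← Matrix.mul_assoc, hPV, Matrix.one_mul]
  have hLR : lyapM Ahat Ahat Nhat Nhat K (MV⁻¹ * (Sᵀ)⁻¹) = P * Ftil T - Fhat 0 := by
    rw [← hkey, hVR, hFtilI, Matrix.mul_sub, hFtil0, hFhat0, hX0hat, ← Matrix.mul_assoc]
  have hLdiff : lyapM Ahat Ahat Nhat Nhat K (intM Fhat T - MV⁻¹ * (Sᵀ)⁻¹)
      = Fhat T - P * Ftil T := by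
    rw [lyap_sub, hFhatI, hLR]; abel
  have hdKh : IsUnit (kronM Ahat Ahat Nhat Nhat K).det :=
    (Matrix.isUnit_iff_isUnit_det _).mp hLhat
  have hunvec1 : unvecM ((kronM Ahat Ahat Nhat Nhat K)⁻¹ *ᵥ vecM (Fhat T - P * Ftil T))
      = intM Fhat T - MV⁻¹ * (Sᵀ)⁻¹ := by
    rw [← hLdiff, vec_lyap hK, Matrix.mulVec_mulVec, Matrix.nonsing_inv_mul _ hdKh,
      Matrix.one_mulVec, unvec_vec]
  refine ⟨?_, ?_⟩
  · rw [hunvec1, Matrix.mul_sub, hVR]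
  -- Part (ii)
  · have hGhat' : solvesODE (lyapM Ahatᵀ Ahatᵀ (fun i => (Nhat i)ᵀ) (fun i => (Nhat i)ᵀ) K)
        Ghat T := by rwa [lyapAdj_eq] at hGhat
    have hGtil' : solvesODE (lyapM Aᵀ Ahatᵀ (fun i => (N i)ᵀ) (fun i => (Nhat i)ᵀ) K)
        Gtil T := by rwa [lyapAdj_eq] at hGtil
    have hY' : solvesODE (lyapM Aᵀ (S * Ahat * S⁻¹)ᵀ (fun i => (N i)ᵀ)
        (fun i => (S * Nhat i * S⁻¹)ᵀ) K) Y T := by rwa [lyapAdj_eq] at hY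
    have hGhatI : lyapM Ahatᵀ Ahatᵀ (fun i => (Nhat i)ᵀ) (fun i => (Nhat i)ᵀ) K (intM Ghat T)
        = Ghat T - Ghat 0 := lyap_intM hK hT0 hGhat'
    have hGtilI : lyapM Aᵀ Ahatᵀ (fun i => (N i)ᵀ) (fun i => (Nhat i)ᵀ) K (intM Gtil T)
        = Gtil T - Gtil 0 := lyap_intM hK hT0 hGtil'
    have hconj2 : ∀ Z : Matrix (Fin n) (Fin nh) ℝ,
        lyapM Aᵀ (S * Ahat * S⁻¹)ᵀ (fun i => (N i)ᵀ) (fun i => (S * Nhat i * S⁻¹)ᵀ) K (Z * S⁻¹)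
          = lyapM Aᵀ Ahatᵀ (fun i => (N i)ᵀ) (fun i => (Nhat i)ᵀ) K Z * S⁻¹ := by
      intro Z
      have hc : ∀ (M : Matrix (Fin nh) (Fin nh) ℝ) (Y' : Matrix (Fin n) (Fin nh) ℝ),
          Y' * S⁻¹ * (S * M * S⁻¹) = Y' * M * S⁻¹ := by
        intro M Y'
        rw [show Y' * S⁻¹ * (S * M * S⁻¹) = Y' * (S⁻¹ * S) * M * S⁻¹ by
          simp only [Matrix.mul_assoc], hS'S, Matrix.mul_one]
      simp only [lyapM, Matrix.add_mul, Matrix.sum_mul, Matrix.smul_mul,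
        Matrix.transpose_transpose]
      rw [← Matrix.mul_assoc Aᵀ Z S⁻¹, hc Ahat Z]
      congr 1
      refine Finset.sum_congr rfl fun i _ => Finset.sum_congr rfl fun j _ => ?_
      rw [← Matrix.mul_assoc (N i)ᵀ Z S⁻¹, hc (Nhat j) ((N i)ᵀ * Z), Matrix.mul_assoc]
    have hYg : solvesODE (lyapM Aᵀ (S * Ahat * S⁻¹)ᵀ (fun i => (N i)ᵀ)
        (fun i => (S * Nhat i * S⁻¹)ᵀ) K) (fun t => Gtil t * S⁻¹) T :=
      solvesODE_mul_const S⁻¹ hconj2 hGtil'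
    have h0Y : Y 0 = Gtil 0 * S⁻¹ := by
      rw [hY0, hGtil0, ← Matrix.mul_assoc]
    have hYGt : ∀ t ∈ Set.Icc (0:ℝ) T, Y t = Gtil t * S⁻¹ := by
      have huniq := lin_ode_unique (kronM Aᵀ (S * Ahat * S⁻¹)ᵀ (fun i => (N i)ᵀ)
          (fun i => (S * Nhat i * S⁻¹)ᵀ) K)
        (fun t => vecM (Y t)) (fun t => vecM (Gtil t * S⁻¹)) T
        (hY'.vecDeriv hK) (hYg.vecDeriv hK) (by rw [h0Y])
      intro t ht
      exact congrArg unvecM (huniq ht)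
    have hintY : intM Y T = intM Gtil T * S⁻¹ := by
      rw [intM_congr hT0 hYGt]
      exact intM_mul_const hT0 (fun i j => hGtil'.contOn _ i j) S⁻¹
    have hWint : W * (MW⁻¹ * S) = intM Gtil T := by
      rw [hW, hintY]
      rw [show intM Gtil T * S⁻¹ * MW * (MW⁻¹ * S)
          = intM Gtil T * S⁻¹ * (MW * MW⁻¹) * S by simp only [Matrix.mul_assoc],
        Matrix.mul_nonsing_inv MW hdMW, Matrix.mul_one, Matrix.mul_assoc, hS'S,
        Matrix.mul_one]
    have hQR : Q * (Vᵀ * W * (MW⁻¹ * S)) = intM Gtil T := by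
      rw [hQdef]
      rw [show W * (Vᵀ * W)⁻¹ * (Vᵀ * W * (MW⁻¹ * S))
          = W * ((Vᵀ * W)⁻¹ * (Vᵀ * W)) * (MW⁻¹ * S) by simp only [Matrix.mul_assoc],
        Matrix.nonsing_inv_mul _ hdVW, Matrix.mul_one, hWint]
    have hAhatT : Ahatᵀ = Vᵀ * Aᵀ * Q := by
      rw [hAhat, Matrix.transpose_mul, Matrix.transpose_mul, hPQ, ← Matrix.mul_assoc]
    have hNhatT : ∀ i, (Nhat i)ᵀ = Vᵀ * (N i)ᵀ * Q := by
      intro i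
      rw [hNhat i, Matrix.transpose_mul, Matrix.transpose_mul, hPQ, ← Matrix.mul_assoc]
    have hkey2 : ∀ Z : Matrix (Fin nh) (Fin nh) ℝ,
        Vᵀ * lyapM Aᵀ Ahatᵀ (fun i => (N i)ᵀ) (fun i => (Nhat i)ᵀ) K (Q * Z)
          = lyapM Ahatᵀ Ahatᵀ (fun i => (Nhat i)ᵀ) (fun i => (Nhat i)ᵀ) K Z := by
      intro Z
      simp only [lyapM, Matrix.mul_add, Matrix.mul_sum, Matrix.mul_smul,
        Matrix.transpose_transpose, hAhatT, hNhatT, ← Matrix.mul_assoc, hVQ, Matrix.one_mul]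
    have hLR2 : lyapM Ahatᵀ Ahatᵀ (fun i => (Nhat i)ᵀ) (fun i => (Nhat i)ᵀ) K
        (Vᵀ * W * (MW⁻¹ * S)) = Vᵀ * Gtil T - Ghat 0 := by
      rw [← hkey2, hQR, hGtilI, Matrix.mul_sub, hGtil0, hGhat0, hChat, Matrix.transpose_mul,
        ← Matrix.mul_assoc, ← Matrix.mul_assoc]
    have hLdiff2 : lyapM Ahatᵀ Ahatᵀ (fun i => (Nhat i)ᵀ) (fun i => (Nhat i)ᵀ) K
        (intM Ghat T - Vᵀ * W * (MW⁻¹ * S)) = Ghat T - Vᵀ * Gtil T := by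
      rw [lyap_sub, hGhatI, hLR2]; abel
    have hdKht : IsUnit ((kronM Ahat Ahat Nhat Nhat K)ᵀ).det := by
      rw [Matrix.det_transpose]
      exact (Matrix.isUnit_iff_isUnit_det _).mp hLhat
    have hunvec2 : unvecM (((kronM Ahat Ahat Nhat Nhat K)ᵀ)⁻¹ *ᵥ vecM (Ghat T - Vᵀ * Gtil T))
        = intM Ghat T - Vᵀ * W * (MW⁻¹ * S) := by
      rw [← hLdiff2, vec_lyap hK, ← kron_transpose, Matrix.mulVec_mulVec,
        Matrix.nonsing_inv_mul _ hdKht, Matrix.one_mulVec, unvec_vec]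
    rw [hunvec2, Matrix.mul_sub, hQR]
end

section
/- Let S ∈ ℝ^{n̂×n̂} be invertible and set Ã = SÂS⁻¹, X̃₀ = SX̂₀, C̃ = ĈS⁻¹, Ñ_i = SN̂_iS⁻¹. Let X : [0,T] → ℝ^{n×n̂} be the unique solution of X'(t) = AX(t) + X(t)Ãᵀ + Σ_{i,j=1}^q N_i X(t) Ñ_jᵀ k_{ij}, X(0) = X₀X̃₀ᵀ, and let Y : [0,T] → ℝ^{n×n̂} be the unique solution of Y'(t) = AᵀY(t) + Y(t)Ã + Σ_{i,j=1}^q N_iᵀ Y(t) Ñ_j k_{ij}, Y(0) = CᵀC̃. Then F̃(t) = X(t)S⁻ᵀ and G̃(t) = Y(t)S for all t ∈ [0,T]. -/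
open Matrix MeasureTheory Filter
open scoped Kronecker Topology

/-- Uniqueness of solutions of a linear matrix ODE on `[0,T]`. -/
lemma solvesODE_unique {a b : Type*} [Fintype a] [Fintype b]
    (L : Matrix a b ℝ → Matrix a b ℝ) (hL : IsLinearMap ℝ L)
    {F G : ℝ → Matrix a b ℝ} {T : ℝ}
    (hF : solvesODE L F T) (hG : solvesODE L G T) (h0 : F 0 = G 0) :
    ∀ t ∈ Set.Icc (0:ℝ) T, F t = G t := by
  let lm : ((b × a) → ℝ) →ₗ[ℝ] ((b × a) → ℝ) :=
    { toFun := fun v => vecM (L (unvecM v))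
      map_add' := by
        intro x y
        have : unvecM (x + y) = unvecM x + unvecM y := rfl
        simp [this, hL.map_add, vecM]; rfl
      map_smul' := by
        intro c x
        have : unvecM (c • x) = c • unvecM x := rfl
        simp [this, hL.map_smul, vecM]; rfl }
  have hlip : LipschitzWith ‖lm.toContinuousLinearMap‖₊ lm.toContinuousLinearMap :=
    lm.toContinuousLinearMap.lipschitz
  have key : Set.EqOn (fun t => vecM (F t)) (fun t => vecM (G t)) (Set.Icc 0 T) := by
    apply ODE_solution_unique (v := fun _ x => lm.toContinuousLinearMap x) (fun _ => hlip)
    · intro t ht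
      apply ContinuousAt.continuousWithinAt
      apply continuousAt_pi.2
      intro p
      exact (hF t ht p.2 p.1).continuousAt
    · intro t ht
      have ht' : t ∈ Set.Icc (0:ℝ) T := Set.Ico_subset_Icc_self ht
      apply HasDerivAt.hasDerivWithinAt
      apply hasDerivAt_pi.2
      intro p
      have h1 : unvecM (vecM (F t)) = F t := rfl
      have := hF t ht' p.2 p.1
      simpa [lm, vecM, h1] using this
    · intro t ht
      apply ContinuousAt.continuousWithinAt
      apply continuousAt_pi.2
      intro p
      exact (hG t ht p.2 p.1).continuousAt
    · intro t ht
      have ht' : t ∈ Set.Icc (0:ℝ) T := Set.Ico_subset_Icc_self ht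
      apply HasDerivAt.hasDerivWithinAt
      apply hasDerivAt_pi.2
      intro p
      have h1 : unvecM (vecM (G t)) = G t := rfl
      have := hG t ht' p.2 p.1
      simpa [lm, vecM, h1] using this
    · simp [h0]
  intro t ht
  have := key ht
  ext i j
  exact congrFun this (j, i)

lemma lyapM_linear {a b : Type*} [Fintype a] [Fintype b] {q : ℕ}
    (A₁ : Matrix a a ℝ) (A₂ : Matrix b b ℝ)
    (N₁ : Fin q → Matrix a a ℝ) (N₂ : Fin q → Matrix b b ℝ)
    (K : Matrix (Fin q) (Fin q) ℝ) :
    IsLinearMap ℝ (lyapM A₁ A₂ N₁ N₂ K) := by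
  constructor
  · intro X Y
    simp only [lyapM, Matrix.mul_add, Matrix.add_mul, smul_add, Finset.sum_add_distrib]
    abel
  · intro c X
    simp only [lyapM, Matrix.mul_smul, Matrix.smul_mul, smul_add, Finset.smul_sum,
      smul_comm c]

lemma lyapAdjM_linear {a b : Type*} [Fintype a] [Fintype b] {q : ℕ}
    (A₁ : Matrix a a ℝ) (A₂ : Matrix b b ℝ)
    (N₁ : Fin q → Matrix a a ℝ) (N₂ : Fin q → Matrix b b ℝ)
    (K : Matrix (Fin q) (Fin q) ℝ) :
    IsLinearMap ℝ (lyapAdjM A₁ A₂ N₁ N₂ K) := by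
  constructor
  · intro X Y
    simp only [lyapAdjM, Matrix.mul_add, Matrix.add_mul, smul_add, Finset.sum_add_distrib]
    abel
  · intro c X
    simp only [lyapAdjM, Matrix.mul_smul, Matrix.smul_mul, smul_add, Finset.smul_sum,
      smul_comm c]

/-- Right multiplication by a constant matrix transports ODE solutions between
compatible linear operators. -/
lemma solvesODE_mulRight {a b : Type*} [Fintype a] [Fintype b]
    (L₁ L₂ : Matrix a b ℝ → Matrix a b ℝ) (M : Matrix b b ℝ)
    (h : ∀ Z, L₂ (Z * M) = L₁ Z * M)
    {F : ℝ → Matrix a b ℝ} {T : ℝ} (hF : solvesODE L₁ F T) :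
    solvesODE L₂ (fun t => F t * M) T := by
  intro t ht i j
  have hsum : HasDerivAt (fun s => ∑ k, F s i k * M k j)
      (∑ k, L₁ (F t) i k * M k j) t :=
    HasDerivAt.fun_sum fun k _ => (hF t ht i k).mul_const (M k j)
  have h2 : L₂ (F t * M) i j = ∑ k, L₁ (F t) i k * M k j := by
    rw [h (F t), Matrix.mul_apply]
  rw [h2]
  simpa [Matrix.mul_apply] using hsum

/-- the state-space-transformed Sylvester solutions `X`, `Y` recover the
mixed covariance functions: `F̃(t) = X(t) S⁻ᵀ` and `G̃(t) = Y(t) S` on `[0,T]`. -/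
theorem stmt_9 {n nh m p q : ℕ} (T : ℝ) (hT : 0 < T)
    (A : Matrix (Fin n) (Fin n) ℝ) (N : Fin q → Matrix (Fin n) (Fin n) ℝ)
    (K : Matrix (Fin q) (Fin q) ℝ) (hK : K.IsSymm)
    (X₀ : Matrix (Fin n) (Fin m) ℝ) (C : Matrix (Fin p) (Fin n) ℝ)
    (Ahat : Matrix (Fin nh) (Fin nh) ℝ) (Nhat : Fin q → Matrix (Fin nh) (Fin nh) ℝ)
    (X0hat : Matrix (Fin nh) (Fin m) ℝ) (Chat : Matrix (Fin p) (Fin nh) ℝ)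
    (S : Matrix (Fin nh) (Fin nh) ℝ) (hS : IsUnit S)
    (X Y : ℝ → Matrix (Fin n) (Fin nh) ℝ)
    (hX : solvesODE
      (lyapM A (S * Ahat * S⁻¹) N (fun i => S * Nhat i * S⁻¹) K) X T)
    (hX0 : X 0 = X₀ * (S * X0hat)ᵀ)
    (hY : solvesODE
      (lyapAdjM A (S * Ahat * S⁻¹) N (fun i => S * Nhat i * S⁻¹) K) Y T)
    (hY0 : Y 0 = Cᵀ * (Chat * S⁻¹))
    (Ftil : ℝ → Matrix (Fin n) (Fin nh) ℝ)
    (hFtil : solvesODE (lyapM A Ahat N Nhat K) Ftil T)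
    (hFtil0 : Ftil 0 = X₀ * X0hatᵀ)
    (Gtil : ℝ → Matrix (Fin n) (Fin nh) ℝ)
    (hGtil : solvesODE (lyapAdjM A Ahat N Nhat K) Gtil T)
    (hGtil0 : Gtil 0 = Cᵀ * Chat) :
    ∀ t ∈ Set.Icc (0:ℝ) T, Ftil t = X t * (S⁻¹)ᵀ ∧ Gtil t = Y t * S := by
  have hSd : IsUnit S.det := (Matrix.isUnit_iff_isUnit_det S).1 hS
  have hinv1 : S⁻¹ * S = 1 := Matrix.nonsing_inv_mul S hSd
  have hinv2 : S * S⁻¹ = 1 := Matrix.mul_nonsing_inv S hSd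
  have hinvT1 : Sᵀ * (S⁻¹)ᵀ = 1 := by
    rw [← Matrix.transpose_mul, hinv1, Matrix.transpose_one]
  -- X side
  have hinvT1' : Sᵀ * (Sᵀ)⁻¹ = 1 := by
    rw [← Matrix.transpose_nonsing_inv, hinvT1]
  have hXsol : solvesODE (lyapM A Ahat N Nhat K) (fun t => X t * (S⁻¹)ᵀ) T := by
    apply solvesODE_mulRight _ _ _ _ hX
    intro Z
    simp only [lyapM, Matrix.transpose_mul, Matrix.transpose_nonsing_inv, Matrix.add_mul,
      Matrix.sum_mul, Matrix.smul_mul, Matrix.mul_assoc, hinvT1', Matrix.mul_one]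
  have hXinit : Ftil 0 = X 0 * (S⁻¹)ᵀ := by
    rw [hX0, hFtil0, Matrix.transpose_mul, Matrix.mul_assoc, Matrix.mul_assoc,
      hinvT1, Matrix.mul_one]
  -- Y side
  have hYsol : solvesODE (lyapAdjM A Ahat N Nhat K) (fun t => Y t * S) T := by
    apply solvesODE_mulRight _ _ _ _ hY
    intro Z
    simp only [lyapAdjM, Matrix.add_mul, Matrix.sum_mul, Matrix.smul_mul,
      Matrix.mul_assoc, hinv1, Matrix.mul_one]
  have hYinit : Gtil 0 = Y 0 * S := by
    rw [hY0, hGtil0, Matrix.mul_assoc, Matrix.mul_assoc, hinv1, Matrix.mul_one]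
  intro t ht
  exact ⟨solvesODE_unique _ (lyapM_linear A Ahat N Nhat K) hFtil hXsol hXinit t ht,
    solvesODE_unique _ (lyapAdjM_linear A Ahat N Nhat K) hGtil hYsol hYinit t ht⟩
end
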